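/- arXiv:2403.07549 — 5 statements merged into one kernel-verified Lean document; each statement's English description precedes it below -/
import Mathlib

section
/- Let x_i : [0,∞) → R^d (i = 1,...,N) be C^1 solutions of dx_i/dt = (1/N) Σ_j a_{ij}(t)(x_j − x_i) with a_{ij}(t) ≥ 0 continuous. Then the function γ_max(t) := max_i |x_i(t)| is non-increasing in t. -/
open scoped BigOperators

open Set Filter Topology
open scoped RealInnerProductSpace

theorem gammaMax_antitone
    (N d : ℕ) (hN : 2 ≤ N)
    (x : Fin N → ℝ → EuclideanSpace ℝ (Fin d))
    (a : Fin N → Fin N → ℝ → ℝ)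
    (ha_cont : ∀ i j, Continuous (a i j))
    (ha : ∀ i j t, 0 ≤ a i j t)
    (hx : ∀ i, ∀ t ≥ (0:ℝ), HasDerivAt (x i)
      ((1 / (N : ℝ)) • ∑ j, a i j t • (x j t - x i t)) t) :
    AntitoneOn (fun t => ⨆ i, ‖x i t‖) (Set.Ici (0:ℝ)) := by
  haveI : Nonempty (Fin N) := ⟨⟨0, by omega⟩⟩
  have hne : (Finset.univ : Finset (Fin N)).Nonempty := Finset.univ_nonempty
  -- the squared max function
  set g : Fin N → ℝ → ℝ := fun i u => ‖x i u‖ ^ 2 with hg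
  set M : ℝ → ℝ := fun u => Finset.univ.sup' hne (fun i => g i u) with hM
  -- derivative of g i
  have hgder : ∀ i, ∀ u ≥ (0:ℝ), HasDerivAt (g i)
      (2 * ⟪x i u, (1 / (N : ℝ)) • (∑ j, a i j u • (x j u - x i u))⟫) u := by
    intro i u hu
    have h := (hx i u hu).inner ℝ (hx i u hu)
    have heq : (fun t => ⟪x i t, x i t⟫) = g i := by
      funext t; rw [real_inner_self_eq_norm_sq]
    rw [heq] at h
    refine h.congr_deriv ?_
    rw [real_inner_comm (x i u)]
    ring
  -- the derivative is nonpositive at a maximizing index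
  have hneg : ∀ i u, (∀ j, ‖x j u‖ ≤ ‖x i u‖) →
      2 * ⟪x i u, (1 / (N : ℝ)) • (∑ j, a i j u • (x j u - x i u))⟫ ≤ 0 := by
    intro i u hmax
    have h1 : ⟪x i u, (∑ j, a i j u • (x j u - x i u))⟫ ≤ 0 := by
      rw [inner_sum]
      apply Finset.sum_nonpos
      intro j _
      rw [real_inner_smul_right, inner_sub_right]
      have h2 : ⟪x i u, x j u⟫ ≤ ‖x i u‖ * ‖x j u‖ := real_inner_le_norm _ _
      have h3 : ‖x i u‖ * ‖x j u‖ ≤ ‖x i u‖ * ‖x i u‖ :=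
        mul_le_mul_of_nonneg_left (hmax j) (norm_nonneg _)
      have h4 : ⟪x i u, x i u⟫ = ‖x i u‖ * ‖x i u‖ := real_inner_self_eq_norm_mul_norm _
      have : ⟪x i u, x j u⟫ - ⟪x i u, x i u⟫ ≤ 0 := by
        rw [h4]; linarith
      exact mul_nonpos_of_nonneg_of_nonpos (ha i j u) this
    rw [real_inner_smul_right]
    have hN0 : (0:ℝ) ≤ 1 / (N : ℝ) := by positivity
    nlinarith
  -- continuity of each g i at nonneg points
  have hgcont : ∀ i u, (0:ℝ) ≤ u → ContinuousAt (g i) u := by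
    intro i u hu
    exact ((hx i u hu).continuousAt.norm.pow 2)
  -- key monotonicity of M
  have key : ∀ s ∈ Ici (0:ℝ), ∀ t, s ≤ t → M t ≤ M s := by
    intro s hs t hst
    have hMcont : ContinuousOn M (Icc s t) := by
      intro u hu
      exact (ContinuousAt.finset_sup'_apply hne fun i _ =>
        hgcont i u (le_trans hs hu.1)).continuousWithinAt
    have := image_le_of_liminf_slope_right_le_deriv_boundary (B := fun _ => M s)
      (B' := fun _ => 0) hMcont le_rfl continuousOn_const
      (fun u _ => hasDerivWithinAt_const u _ (M s))
      ?_ (Set.right_mem_Icc.2 hst)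
    · exact this
    · intro u hu r hr
      have hu0 : (0:ℝ) ≤ u := le_trans hs hu.1
      -- eventual bound on slopes of each g j
      have hev : ∀ j : Fin N, ∀ᶠ z in 𝓝[>] u, (g j z - M u) / (z - u) < r := by
        intro j
        by_cases hj : g j u = M u
        · -- maximizing index: derivative ≤ 0 < r
          have hmax : ∀ k, ‖x k u‖ ≤ ‖x j u‖ := by
            intro k
            have hk : g k u ≤ M u := Finset.le_sup' (fun i => g i u) (Finset.mem_univ k)
            rw [← hj] at hk
            exact (pow_le_pow_iff_left₀ (norm_nonneg _) (norm_nonneg _) two_ne_zero).1 hk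
          have hD := hgder j u hu0
          have hDle := hneg j u hmax
          have hslope : Tendsto (slope (g j) u) (𝓝[>] u) (𝓝 _) :=
            (hasDerivAt_iff_tendsto_slope.1 hD).mono_left
              (nhdsWithin_mono u fun z hz => ne_of_gt hz)
          have := hslope.eventually_lt_const (lt_of_le_of_lt hDle hr)
          filter_upwards [this] with z hz
          rw [slope_def_field] at hz
          rwa [hj] at hz
        · -- non-maximizing index: g j z < M u near u
          have hjlt : g j u < M u :=
            lt_of_le_of_ne (Finset.le_sup' (fun i => g i u) (Finset.mem_univ j)) hj
          have hev1 : ∀ᶠ z in 𝓝[>] u, g j z < M u :=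
            ((hgcont j u hu0).eventually_lt_const hjlt).filter_mono nhdsWithin_le_nhds
          filter_upwards [hev1, self_mem_nhdsWithin] with z hz1 hz2
          have hzu : 0 < z - u := sub_pos.2 hz2
          exact lt_trans (div_neg_of_neg_of_pos (by linarith) hzu) hr
      apply Filter.Eventually.frequently
      filter_upwards [eventually_all.2 hev] with z hz
      obtain ⟨j, _, hj⟩ := Finset.exists_mem_eq_sup' hne (fun i => g i z)
      rw [slope_def_field, hM]
      simp only
      rw [hj]
      exact hz j
  -- conclude
  intro s hs t ht hst
  simp only
  have hbdd : BddAbove (Set.range fun j => ‖x j s‖) := (Set.finite_range _).bddAbove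
  apply ciSup_le
  intro i
  have h1 : g i t ≤ M t := Finset.le_sup' (fun i => g i t) (Finset.mem_univ i)
  have h2 : M t ≤ M s := key s hs t hst
  obtain ⟨j, _, hj⟩ := Finset.exists_mem_eq_sup' hne (fun i => g i s)
  have h3 : g i t ≤ g j s := by rw [← hj]; exact le_trans h1 h2
  have h4 : ‖x i t‖ ≤ ‖x j s‖ :=
    (pow_le_pow_iff_left₀ (norm_nonneg _) (norm_nonneg _) two_ne_zero).1 h3
  exact le_trans h4 (le_ciSup hbdd j)
end

section
/- Let x_i : [0,∞) → R^d be C^1 solutions of dx_i/dt = (1/N) Σ_j a_{ij}(t)(x_j − x_i) with 0 ≤ a_{ij}(t) continuous, and let C ⊆ R^d be a closed convex set. If x_i(t_0) ∈ C for all i and some t_0 ≥ 0, then x_i(t) ∈ C for all t ≥ t_0 and all i. -/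
open scoped BigOperators

open Set Filter Topology

theorem convex_invariance
    (N d : ℕ)
    (x : Fin N → ℝ → EuclideanSpace ℝ (Fin d))
    (a : Fin N → Fin N → ℝ → ℝ)
    (ha_cont : ∀ i j, Continuous (a i j))
    (ha : ∀ i j t, 0 ≤ a i j t)
    (hx : ∀ i, ∀ t ≥ (0:ℝ), HasDerivAt (x i)
      ((1 / (N : ℝ)) • ∑ j, a i j t • (x j t - x i t)) t)
    (C : Set (EuclideanSpace ℝ (Fin d))) (hC_closed : IsClosed C) (hC_conv : Convex ℝ C)
    (t₀ : ℝ) (ht₀ : 0 ≤ t₀) (h0 : ∀ i, x i t₀ ∈ C) :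
    ∀ t ≥ t₀, ∀ i, x i t ∈ C := by
  intro t ht i
  by_contra hxC
  obtain ⟨f, u, hfu, hux⟩ := geometric_hahn_banach_closed_point hC_conv hC_closed hxC
  have hne : (Finset.univ : Finset (Fin N)).Nonempty := ⟨i, Finset.mem_univ i⟩
  set F : ℝ → ℝ := fun s => Finset.univ.sup' hne (fun j => f (x j s)) with hF_def
  -- derivative of f ∘ x j
  have hderiv : ∀ j : Fin N, ∀ s : ℝ, 0 ≤ s → HasDerivAt (fun τ => f (x j τ))
      ((1 / (N : ℝ)) * ∑ k, a j k s * (f (x k s) - f (x j s))) s := by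
    intro j s hs
    have h1 : HasDerivAt (fun τ => f (x j τ)) (f ((1 / (N : ℝ)) • ∑ k, a j k s • (x k s - x j s))) s :=
      (f.hasFDerivAt (x := x j s)).comp_hasDerivAt s (hx j s hs)
    convert h1 using 1
    simp [map_smul, map_sum, map_sub, smul_eq_mul]
  -- continuity of F on [t₀, t]
  have hFcont : ContinuousOn F (Icc t₀ t) := by
    intro s hs
    exact (ContinuousAt.finset_sup'_apply hne fun j _ =>
      (hderiv j s (le_trans ht₀ hs.1)).continuousAt).continuousWithinAt
  -- the key Gronwall-type estimate
  have key : ∀ ε : ℝ, 0 < ε → F t ≤ F t₀ + ε * (t - t₀) := by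
    intro ε hε
    have main : ∀ ⦃z⦄, z ∈ Icc t₀ t → F z ≤ F t₀ + ε * (z - t₀) := by
      apply image_le_of_liminf_slope_right_lt_deriv_boundary' (f' := fun _ => (0 : ℝ))
        (B := fun z => F t₀ + ε * (z - t₀)) (B' := fun _ => ε) hFcont
      · -- slope condition
        intro s hs r hr
        refine Filter.Eventually.frequently ?_
        have hall : ∀ᶠ z in 𝓝[>] s, ∀ j : Fin N, f (x j z) < F s + r * (z - s) := by
          rw [eventually_all]
          intro j
          have hle : f (x j s) ≤ F s := Finset.le_sup' (fun j => f (x j s)) (Finset.mem_univ j)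
          have hs0 : (0:ℝ) ≤ s := le_trans ht₀ hs.1
          rcases hle.eq_or_lt with hmax | hlt
          · -- j is a maximizer: the derivative is nonpositive
            have hD := hderiv j s hs0
            have hk : ∀ k : Fin N, f (x k s) ≤ f (x j s) := fun k =>
              (Finset.le_sup' (fun j => f (x j s)) (Finset.mem_univ k)).trans_eq hmax.symm
            have hsum : (∑ k, a j k s * (f (x k s) - f (x j s))) ≤ 0 :=
              Finset.sum_nonpos fun k _ =>
                mul_nonpos_of_nonneg_of_nonpos (ha j k s) (sub_nonpos.2 (hk k))
            have hDle : (1 / (N : ℝ)) * ∑ k, a j k s * (f (x k s) - f (x j s)) ≤ 0 :=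
              mul_nonpos_of_nonneg_of_nonpos (by positivity) hsum
            have hslope := hasDerivAt_iff_tendsto_slope.1 hD
            have hev : ∀ᶠ z in 𝓝[≠] s, slope (fun τ => f (x j τ)) s z < r :=
              hslope (Iio_mem_nhds (lt_of_le_of_lt hDle hr))
            have hev' : ∀ᶠ z in 𝓝[>] s, slope (fun τ => f (x j τ)) s z < r :=
              nhdsWithin_mono s (fun z hz => ne_of_gt hz) hev
            filter_upwards [hev', self_mem_nhdsWithin] with z hz1 hz2
            have hzs : s < z := hz2
            rw [slope_def_field, div_lt_iff₀ (by linarith)] at hz1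
            have : f (x j z) - f (x j s) < r * (z - s) := by linarith
            linarith [hmax.le]
          · -- j is not a maximizer: use continuity
            have hc : ContinuousAt (fun τ => f (x j τ)) s := (hderiv j s hs0).continuousAt
            have hev : ∀ᶠ z in 𝓝 s, f (x j z) < F s := hc (Iio_mem_nhds hlt)
            have hev' : ∀ᶠ z in 𝓝[>] s, f (x j z) < F s := nhdsWithin_le_nhds hev
            filter_upwards [hev', self_mem_nhdsWithin] with z hz1 hz2
            have hzs : s < z := hz2
            nlinarith [mul_pos hr (sub_pos.2 hzs)]
        filter_upwards [hall, self_mem_nhdsWithin] with z h1 h2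
        have hzs : s < z := h2
        have hFz : F z < F s + r * (z - s) := by
          rw [hF_def]
          exact (Finset.sup'_lt_iff hne).2 fun j _ => h1 j
        rw [slope_def_field, div_lt_iff₀ (by linarith)]
        linarith
      · simp
      · exact (continuous_const.add (continuous_const.mul
          (continuous_id.sub continuous_const))).continuousOn
      · intro s _
        have : HasDerivAt (fun z : ℝ => F t₀ + ε * (z - t₀)) ε s := by
          simpa using (((hasDerivAt_id s).sub_const t₀).const_mul ε).const_add (F t₀)
        exact this.hasDerivWithinAt
      · intro s _ _
        exact hε
    exact main ⟨ht, le_refl t⟩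
  -- conclude
  have hFt0 : F t₀ < u := (Finset.sup'_lt_iff hne).2 fun j _ => hfu _ (h0 j)
  have hFt : F t ≤ F t₀ := by
    refine le_of_forall_pos_le_add fun ε hε => ?_
    have h1 := key (ε / (t - t₀ + 1)) (div_pos hε (by linarith))
    have h2 : ε / (t - t₀ + 1) * (t - t₀) ≤ ε := by
      rw [div_mul_eq_mul_div, div_le_iff₀ (by linarith)]
      nlinarith
    linarith
  have hFtu : u < F t :=
    lt_of_lt_of_le hux (Finset.le_sup' (fun j => f (x j t)) (Finset.mem_univ i))
  linarith
end

section
/- Define ψ(α, z, τ) := α + e^{−K τ}(z − α) for K > 0. Let x_i : [θ, θ+T] → R (i = 1,...,N) solve dx_i/dt = (1/N) Σ_j a_{ij}(t)(x_j − x_i) with 0 ≤ a_{ij}(t), and suppose (1/N) Σ_j a_{ij}(t) ≤ K for all t and i, and x_j(θ) ≥ α for all j. If for some index i and some τ* ∈ [0,T] it holds x_i(θ + τ*) ≥ ψ(α, z, τ*) with z ≥ α, then x_i(θ + τ) ≥ ψ(α, z, τ) for all τ ∈ [τ*, T]. -/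
open scoped BigOperators

theorem barrier_lemma_psi
    (N : ℕ) (hN : 1 ≤ N)
    (K T θ α z : ℝ) (hK : 0 < K) (hT : 0 ≤ T) (hθ : 0 ≤ θ) (hz : α ≤ z)
    (x : Fin N → ℝ → ℝ)
    (a : Fin N → Fin N → ℝ → ℝ)
    (ha : ∀ i j t, 0 ≤ a i j t)
    (haK : ∀ i t, (1 / (N : ℝ)) * ∑ j, a i j t ≤ K)
    (hx : ∀ i, ∀ t ∈ Set.Icc θ (θ + T), HasDerivAt (x i)
      ((1 / (N : ℝ)) * ∑ j, a i j t * (x j t - x i t)) t)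
    (hinit : ∀ j, α ≤ x j θ)
    (i : Fin N) (τstar : ℝ) (hτstar : τstar ∈ Set.Icc 0 T)
    (hstart : α + Real.exp (-K * τstar) * (z - α) ≤ x i (θ + τstar)) :
    ∀ τ ∈ Set.Icc τstar T,
      α + Real.exp (-K * τ) * (z - α) ≤ x i (θ + τ) := by
  have hθb : θ ≤ θ + T := le_add_of_nonneg_right hT
  -- continuity of each x j at points of the interval
  have hxc : ∀ j, ContinuousOn (x j) (Set.Icc θ (θ + T)) := fun j t ht =>
    (hx j t ht).continuousAt.continuousWithinAt
  -- Step A : persistence of the lower bound α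
  have claim : ∀ ε > (0:ℝ), ∀ t ∈ Set.Icc θ (θ + T), ∀ j,
      0 < Real.exp (K*(t-θ)) * (x j t - α) + ε * Real.exp ((K+1)*(t-θ)) := by
    intro ε hε
    by_contra hcon
    push_neg at hcon
    obtain ⟨t₁, ht₁, j₁, hj₁⟩ := hcon
    set v : Fin N → ℝ → ℝ := fun j t =>
      Real.exp (K*(t-θ)) * (x j t - α) + ε * Real.exp ((K+1)*(t-θ)) with hv
    -- derivative of v j
    have hvd : ∀ j, ∀ t ∈ Set.Icc θ (θ + T), HasDerivAt (v j)
        (Real.exp (K*(t-θ)) * K * (x j t - α)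
          + Real.exp (K*(t-θ)) * ((1 / (N : ℝ)) * ∑ k, a j k t * (x k t - x j t))
          + ε * (Real.exp ((K+1)*(t-θ)) * (K+1))) t := by
      intro j t ht
      have h1 : HasDerivAt (fun s => K*(s-θ)) K t := by
        simpa using ((hasDerivAt_id t).sub_const θ).const_mul K
      have h2 : HasDerivAt (fun s => (K+1)*(s-θ)) (K+1) t := by
        simpa using ((hasDerivAt_id t).sub_const θ).const_mul (K+1)
      exact (h1.exp.mul ((hx j t ht).sub_const α)).add (h2.exp.const_mul ε)
    -- continuity of v j on the interval
    have hvc : ∀ j, ContinuousOn (v j) (Set.Icc θ (θ + T)) := by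
      intro j
      apply ContinuousOn.add
      · exact ((ContinuousOn.rexp (continuousOn_const.mul (continuousOn_id.sub continuousOn_const))).mul
          ((hxc j).sub continuousOn_const))
      · exact continuousOn_const.mul
          (ContinuousOn.rexp (continuousOn_const.mul (continuousOn_id.sub continuousOn_const)))
    -- the "bad" set
    set S : Set ℝ := {t ∈ Set.Icc θ (θ + T) | ∃ j, v j t ≤ 0} with hS
    have hSicc : S ⊆ Set.Icc θ (θ + T) := fun t ht => ht.1
    have hSclosed : IsClosed S := by
      have : S = ⋃ j : Fin N, (Set.Icc θ (θ + T) ∩ (v j) ⁻¹' Set.Iic 0) := by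
        ext t
        simp only [hS, Set.mem_setOf_eq, Set.mem_iUnion, Set.mem_inter_iff,
          Set.mem_preimage, Set.mem_Iic]
        constructor
        · rintro ⟨h1, j, h2⟩; exact ⟨j, h1, h2⟩
        · rintro ⟨j, h1, h2⟩; exact ⟨h1, j, h2⟩
      rw [this]
      exact isClosed_iUnion_of_finite fun j =>
        (hvc j).preimage_isClosed_of_isClosed isClosed_Icc isClosed_Iic
    have hScompact : IsCompact S := isCompact_Icc.of_isClosed_subset hSclosed hSicc
    obtain ⟨t₀, ht₀S, ht₀least⟩ :=
      hScompact.exists_isLeast ⟨t₁, ht₁, j₁, hj₁⟩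
    obtain ⟨ht₀I, j, hj⟩ := ht₀S
    -- everything strictly positive before t₀
    have hpos : ∀ s ∈ Set.Icc θ (θ + T), s < t₀ → ∀ k, 0 < v k s := by
      intro s hs hst k
      by_contra h
      push_neg at h
      exact absurd (ht₀least ⟨hs, k, h⟩) (not_le.2 hst)
    have hvθ : ∀ k, 0 < v k θ := by
      intro k
      have h1 := hinit k
      simp only [hv, sub_self, mul_zero, Real.exp_zero, mul_one, one_mul]
      linarith
    have hθt₀ : θ < t₀ := by
      rcases lt_or_eq_of_le ht₀I.1 with h | h
      · exact h
      · exact absurd hj (not_le.2 (by rw [← h]; exact hvθ j))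
    -- all coordinates nonnegative at t₀
    have hnn : ∀ k, 0 ≤ v k t₀ := by
      intro k
      by_contra h
      push_neg at h
      have hsub : Set.Icc θ t₀ ⊆ Set.Icc θ (θ + T) :=
        Set.Icc_subset_Icc le_rfl ht₀I.2
      have hivt := intermediate_value_Icc' (le_of_lt hθt₀) ((hvc k).mono hsub)
      have h0 : (0:ℝ) ∈ Set.Icc (v k t₀) (v k θ) := ⟨le_of_lt h, le_of_lt (hvθ k)⟩
      obtain ⟨t₂, ht₂, hvt₂⟩ := hivt h0
      have ht₂S : t₂ ∈ S := ⟨hsub ht₂, k, le_of_eq hvt₂⟩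
      have : t₀ ≤ t₂ := ht₀least ht₂S
      have ht₂t₀ : t₂ = t₀ := le_antisymm ht₂.2 this
      rw [ht₂t₀] at hvt₂
      linarith
    have hvj0 : v j t₀ = 0 := le_antisymm hj (hnn j)
    -- the derivative of v j at t₀ is positive
    set E := Real.exp (K*(t₀-θ)) with hE
    set E' := Real.exp ((K+1)*(t₀-θ)) with hE'
    have hEpos : 0 < E := Real.exp_pos _
    have hE'pos : 0 < E' := Real.exp_pos _
    have hEj : E * (x j t₀ - α) = -(ε * E') := by
      have := hvj0
      simp only [hv, ← hE, ← hE'] at this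
      linarith
    have hEk : ∀ k, -(ε * E') ≤ E * (x k t₀ - α) := by
      intro k
      have := hnn k
      simp only [hv, ← hE, ← hE'] at this
      linarith
    have hxk : ∀ k, x j t₀ ≤ x k t₀ := by
      intro k
      have h1 := hEk k
      rw [← hEj] at h1
      nlinarith [hEpos]
    have hDnn : 0 ≤ (1 / (N : ℝ)) * ∑ k, a j k t₀ * (x k t₀ - x j t₀) := by
      apply mul_nonneg (by positivity)
      apply Finset.sum_nonneg
      intro k _
      exact mul_nonneg (ha j k t₀) (sub_nonneg.2 (hxk k))
    have hdpos : 0 < E * K * (x j t₀ - α)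
        + E * ((1 / (N : ℝ)) * ∑ k, a j k t₀ * (x k t₀ - x j t₀))
        + ε * (E' * (K+1)) := by
      have h1 : E * K * (x j t₀ - α) = K * (E * (x j t₀ - α)) := by ring
      have h2 : 0 ≤ E * ((1 / (N : ℝ)) * ∑ k, a j k t₀ * (x k t₀ - x j t₀)) :=
        mul_nonneg (le_of_lt hEpos) hDnn
      rw [h1, hEj]
      nlinarith [mul_pos hε hE'pos]
    -- but the derivative must be nonpositive (left slope argument)
    have hd := hvd j t₀ ht₀I
    rw [← hE, ← hE'] at hd
    have hdwa : HasDerivWithinAt (v j)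
        (E * K * (x j t₀ - α)
          + E * ((1 / (N : ℝ)) * ∑ k, a j k t₀ * (x k t₀ - x j t₀))
          + ε * (E' * (K+1))) (Set.Iio t₀) t₀ := hd.hasDerivWithinAt
    rw [hasDerivWithinAt_iff_tendsto_slope] at hdwa
    have hIio : Set.Iio t₀ \ {t₀} = Set.Iio t₀ :=
      Set.diff_singleton_eq_self (by simp)
    rw [hIio] at hdwa
    have hslope : ∀ᶠ s in nhdsWithin t₀ (Set.Iio t₀), slope (v j) t₀ s ≤ 0 := by
      have hmem : Set.Ioi θ ∈ nhds t₀ := isOpen_Ioi.mem_nhds hθt₀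
      filter_upwards [mem_nhdsWithin_of_mem_nhds hmem, self_mem_nhdsWithin]
        with s hs1 hs2
      have hsI : s ∈ Set.Icc θ (θ + T) := ⟨le_of_lt hs1, le_trans (le_of_lt hs2) ht₀I.2⟩
      have hvs : 0 < v j s := hpos s hsI hs2 j
      rw [slope_def_field]
      have hnum : v j s - v j t₀ > 0 := by rw [hvj0]; linarith
      have hden : s - t₀ < 0 := sub_neg.2 hs2
      exact le_of_lt (div_neg_of_pos_of_neg hnum hden)
    have hle : E * K * (x j t₀ - α)
        + E * ((1 / (N : ℝ)) * ∑ k, a j k t₀ * (x k t₀ - x j t₀))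
        + ε * (E' * (K+1)) ≤ 0 :=
      le_of_tendsto hdwa hslope
    linarith
  have stepA : ∀ t ∈ Set.Icc θ (θ + T), ∀ j, α ≤ x j t := by
    intro t ht j
    by_contra h
    push_neg at h
    set ε₀ := Real.exp (K*(t-θ)) * (α - x j t) / Real.exp ((K+1)*(t-θ)) with hε₀
    have hε₀pos : 0 < ε₀ := by
      apply div_pos (mul_pos (Real.exp_pos _) (by linarith)) (Real.exp_pos _)
    have hc := claim ε₀ hε₀pos t ht j
    have : ε₀ * Real.exp ((K+1)*(t-θ)) = Real.exp (K*(t-θ)) * (α - x j t) := by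
      rw [hε₀]
      field_simp
    rw [this] at hc
    nlinarith [Real.exp_pos (K*(t-θ))]
  -- Step B : monotonicity of F t = exp(K(t-θ)) (x i t - α)
  set F : ℝ → ℝ := fun t => Real.exp (K*(t-θ)) * (x i t - α) with hF
  have hFd : ∀ t ∈ Set.Icc θ (θ + T), HasDerivAt F
      (Real.exp (K*(t-θ)) * K * (x i t - α)
        + Real.exp (K*(t-θ)) * ((1 / (N : ℝ)) * ∑ k, a i k t * (x k t - x i t))) t := by
    intro t ht
    have h1 : HasDerivAt (fun s => K*(s-θ)) K t := by
      simpa using ((hasDerivAt_id t).sub_const θ).const_mul K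
    exact h1.exp.mul ((hx i t ht).sub_const α)
  have hFd_nonneg : ∀ t ∈ Set.Icc θ (θ + T),
      0 ≤ Real.exp (K*(t-θ)) * K * (x i t - α)
        + Real.exp (K*(t-θ)) * ((1 / (N : ℝ)) * ∑ k, a i k t * (x k t - x i t)) := by
    intro t ht
    have hxi : α ≤ x i t := stepA t ht i
    have hsum : ((1 / (N : ℝ)) * ∑ k, a i k t) * (α - x i t)
        ≤ (1 / (N : ℝ)) * ∑ k, a i k t * (x k t - x i t) := by
      rw [mul_assoc]
      apply mul_le_mul_of_nonneg_left _ (by positivity)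
      rw [Finset.sum_mul]
      apply Finset.sum_le_sum
      intro k _
      have : α - x i t ≤ x k t - x i t := by
        have := stepA t ht k; linarith
      exact mul_le_mul_of_nonneg_left this (ha i k t)
    have hA : (1 / (N : ℝ)) * ∑ k, a i k t ≤ K := haK i t
    have hAnn : 0 ≤ (1 / (N : ℝ)) * ∑ k, a i k t := by
      apply mul_nonneg (by positivity)
      exact Finset.sum_nonneg fun k _ => ha i k t
    have hKa : K * (α - x i t) ≤ ((1 / (N : ℝ)) * ∑ k, a i k t) * (α - x i t) := by
      apply mul_le_mul_of_nonpos_right hA (by linarith)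
    have hE : 0 < Real.exp (K*(t-θ)) := Real.exp_pos _
    have : 0 ≤ K * (x i t - α) + (1 / (N : ℝ)) * ∑ k, a i k t * (x k t - x i t) := by
      have := le_trans hKa hsum
      linarith
    nlinarith
  have hFmono : MonotoneOn F (Set.Icc θ (θ + T)) := by
    apply monotoneOn_of_deriv_nonneg (convex_Icc θ (θ + T))
    · exact fun t ht => (hFd t ht).continuousAt.continuousWithinAt
    · intro t ht
      rw [interior_Icc] at ht
      exact (hFd t (Set.mem_Icc_of_Ioo ht)).differentiableAt.differentiableWithinAt
    · intro t ht
      rw [interior_Icc] at ht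
      rw [(hFd t (Set.mem_Icc_of_Ioo ht)).deriv]
      exact hFd_nonneg t (Set.mem_Icc_of_Ioo ht)
  intro τ hτ
  obtain ⟨hτ1, hτ2⟩ := hτ
  obtain ⟨hτs1, hτs2⟩ := hτstar
  have hm1 : θ + τstar ∈ Set.Icc θ (θ + T) := ⟨by linarith, by linarith⟩
  have hm2 : θ + τ ∈ Set.Icc θ (θ + T) := ⟨by linarith, by linarith⟩
  have hFle : F (θ + τstar) ≤ F (θ + τ) := hFmono hm1 hm2 (by linarith)
  have hsimp1 : K * (θ + τstar - θ) = K * τstar := by ring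
  have hsimp2 : K * (θ + τ - θ) = K * τ := by ring
  have hFstar : z - α ≤ F (θ + τstar) := by
    simp only [hF, hsimp1]
    have h1 : Real.exp (-K * τstar) * (z - α) ≤ x i (θ + τstar) - α := by linarith
    have h2 := mul_le_mul_of_nonneg_left h1 (le_of_lt (Real.exp_pos (K * τstar)))
    have hee : Real.exp (K * τstar) * Real.exp (-K * τstar) = 1 := by
      rw [← Real.exp_add]; simp
    calc z - α = Real.exp (K * τstar) * (Real.exp (-K * τstar) * (z - α)) := by
          rw [← mul_assoc, hee, one_mul]
      _ ≤ Real.exp (K * τstar) * (x i (θ + τstar) - α) := h2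
  have hFτ : z - α ≤ F (θ + τ) := le_trans hFstar hFle
  simp only [hF, hsimp2] at hFτ
  have h3 := mul_le_mul_of_nonneg_left hFτ (le_of_lt (Real.exp_pos (-K * τ)))
  have hee2 : Real.exp (-K * τ) * Real.exp (K * τ) = 1 := by
    rw [← Real.exp_add]; simp
  have h4 : Real.exp (-K * τ) * (Real.exp (K * τ) * (x i (θ + τ) - α))
      = x i (θ + τ) - α := by
    rw [← mul_assoc, hee2, one_mul]
  rw [h4] at h3
  linarith
end

section
/- Let x_i : [0,∞) → R solve dx_i/dt = (λ_i/N) Σ_j M_{ij}(t) φ(|x_i − x_j|)(x_j − x_i), where φ is Lipschitz, φ_min := min{φ(r) : 0 ≤ r ≤ D(0)} > 0 with D(0) the initial diameter, each M_{ij} : [0,∞) → [0,1] is measurable and satisfies ∫_t^{t+T} M_{ij}(s) ds ≥ μ for all t ≥ 0 (fixed T, μ > 0), and λ_i ≡ 1. Then consensus holds: lim_{t→∞} (x_i(t) − x_j(t)) = 0 for all i, j. -/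
open MeasureTheory Filter
open scoped BigOperators

set_option maxHeartbeats 1600000

private lemma posPartSq_hasDerivAt (u : ℝ) :
    HasDerivAt (fun v : ℝ => (max v 0)^2) (2 * max u 0) u := by
  rcases lt_trichotomy u 0 with h | h | h
  · have hev : (fun v : ℝ => (max v 0)^2) =ᶠ[nhds u] (fun _ : ℝ => (0:ℝ)) := by
      filter_upwards [Iio_mem_nhds h] with v hv
      simp [max_eq_right (le_of_lt (Set.mem_Iio.mp hv))]
    have h0 : HasDerivAt (fun _ : ℝ => (0:ℝ)) 0 u := hasDerivAt_const u 0
    have := h0.congr_of_eventuallyEq hev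
    simpa [max_eq_right h.le] using this
  · subst h
    rw [hasDerivAt_iff_isLittleO]
    have key : (fun v : ℝ => max v 0 * max v 0) =o[nhds 0] fun v => v := by
      rw [Asymptotics.isLittleO_iff]
      intro c hc
      filter_upwards [Metric.ball_mem_nhds (0:ℝ) hc] with v hv
      have hv' : |v| < c := by simpa [Real.dist_eq] using Metric.mem_ball.mp hv
      have h1 : max v 0 ≤ |v| := max_le (le_abs_self v) (abs_nonneg v)
      have h2 : (0:ℝ) ≤ max v 0 := le_max_right v 0
      have h3 : max v 0 * max v 0 ≤ |v| * |v| := mul_le_mul h1 h1 h2 (abs_nonneg v)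
      have h4 : ‖max v 0 * max v 0‖ = max v 0 * max v 0 := abs_of_nonneg (by positivity)
      rw [h4]
      calc max v 0 * max v 0 ≤ |v| * |v| := h3
        _ ≤ c * |v| := mul_le_mul_of_nonneg_right hv'.le (abs_nonneg v)
        _ = c * ‖v‖ := rfl
    simpa [pow_two, sub_zero, max_self] using key
  · have hev : (fun v : ℝ => (max v 0)^2) =ᶠ[nhds u] (fun v : ℝ => v^2) := by
      filter_upwards [Ioi_mem_nhds h] with v hv
      simp [max_eq_left (le_of_lt (Set.mem_Ioi.mp hv))]
    have h0 : HasDerivAt (fun v : ℝ => v^2) (2*u) u := by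
      simpa using hasDerivAt_pow 2 u
    have := h0.congr_of_eventuallyEq hev
    simpa [max_eq_left h.le] using this

private lemma mul_le_mul_aux {a B q w : ℝ} (ha : 0 ≤ a) (haB : a ≤ B) (hq : q ≤ w)
    (hw : 0 ≤ w) : a * q ≤ B * w :=
  le_trans (mul_le_mul_of_nonneg_left hq ha) (mul_le_mul_of_nonneg_right haB hw)

private lemma cross_le_up (uM xi xj : ℝ) :
    max (xi - uM) 0 * (xj - xi) ≤ max (xi - uM) 0 * max (xj - uM) 0 := by
  rcases le_or_gt xi uM with h | h
  · simp [max_eq_right (sub_nonpos.2 h)]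
  · have h1 : xj - xi ≤ max (xj - uM) 0 := le_trans (by linarith) (le_max_left (xj - uM) 0)
    exact mul_le_mul_of_nonneg_left h1 (le_max_right _ 0)

private lemma cross_le_dn (um xi xj : ℝ) :
    max (um - xi) 0 * (xi - xj) ≤ max (um - xi) 0 * max (um - xj) 0 := by
  rcases le_or_gt um xi with h | h
  · simp [max_eq_right (sub_nonpos.2 h)]
  · have h1 : xi - xj ≤ max (um - xj) 0 := le_trans (by linarith) (le_max_left (um - xj) 0)
    exact mul_le_mul_of_nonneg_left h1 (le_max_right _ 0)

theorem PE_consensus_one_dimensional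
    (N : ℕ) (hN : 2 ≤ N)
    (T μ : ℝ) (hT : 0 < T) (hμ : 0 < μ)
    (φ : ℝ → ℝ) (L : NNReal) (hφ_lip : LipschitzWith L φ)
    (x : Fin N → ℝ → ℝ)
    (hφ_min : ∀ r ∈ Set.Icc (0:ℝ) (⨆ p : Fin N × Fin N, |x p.1 0 - x p.2 0|), 0 < φ r)
    (M : Fin N → Fin N → ℝ → ℝ)
    (hM_meas : ∀ i j, Measurable (M i j))
    (hM0 : ∀ i j s, 0 ≤ M i j s) (hM1 : ∀ i j s, M i j s ≤ 1)
    (hPE : ∀ i j, ∀ t ≥ (0:ℝ), μ ≤ ∫ s in t..(t + T), M i j s)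
    (hx : ∀ i, ∀ t ≥ (0:ℝ), HasDerivAt (x i)
      ((1 / (N : ℝ)) * ∑ j, M i j t * φ (|x i t - x j t|) * (x j t - x i t)) t) :
    ∀ i j, Tendsto (fun t => x i t - x j t) atTop (nhds 0) := by
  classical
  have hN0 : 0 < N := lt_of_lt_of_le (by norm_num) hN
  have hNpos : (0:ℝ) < (N:ℝ) := by exact_mod_cast hN0
  have hNne : (N:ℝ) ≠ 0 := ne_of_gt hNpos
  have hN2 : (2:ℝ) ≤ (N:ℝ) := by exact_mod_cast hN
  have hfin : Nonempty (Fin N) := ⟨⟨0, hN0⟩⟩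
  have hne : (Finset.univ : Finset (Fin N)).Nonempty := Finset.univ_nonempty
  set D0 := ⨆ p : Fin N × Fin N, |x p.1 0 - x p.2 0| with hD0_def
  have hd0 : ∀ i j : Fin N, |x i 0 - x j 0| ≤ D0 := by
    intro i j
    rw [hD0_def]
    exact le_ciSup (f := fun p : Fin N × Fin N => |x p.1 0 - x p.2 0|)
      (Set.Finite.bddAbove (Set.finite_range _)) (⟨i, j⟩ : Fin N × Fin N)
  have hD0nn : 0 ≤ D0 := le_trans (abs_nonneg _) (hd0 ⟨0, hN0⟩ ⟨0, hN0⟩)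
  -- minimum of φ on [0, D0]
  obtain ⟨r0, hr0mem, hr0min⟩ := isCompact_Icc.exists_isMinOn
    (⟨0, Set.left_mem_Icc.2 hD0nn⟩ : (Set.Icc (0:ℝ) D0).Nonempty)
    (hφ_lip.continuous.continuousOn)
  set φm := φ r0 with hφm_def
  have hφm_pos : 0 < φm := hφ_min r0 hr0mem
  have hφm_le : ∀ r ∈ Set.Icc (0:ℝ) D0, φm ≤ φ r := fun r hr => hr0min hr
  have hLnn : (0:ℝ) ≤ (L:ℝ) := L.coe_nonneg
  set ε0 := φm / (2 * ((L:ℝ) + 1)) with hε0_def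
  have hε0pos : 0 < ε0 := by
    apply div_pos hφm_pos; positivity
  have hφ_nn : ∀ r ∈ Set.Icc (0:ℝ) (D0 + ε0), 0 ≤ φ r := by
    intro r hr
    rcases le_or_gt r D0 with h | h
    · exact le_of_lt (lt_of_lt_of_le hφm_pos (hφm_le r ⟨hr.1, h⟩))
    · have hlip := hφ_lip.dist_le_mul r D0
      rw [Real.dist_eq, Real.dist_eq] at hlip
      have h1 : |r - D0| ≤ ε0 := by
        rw [abs_of_nonneg (by linarith)]; linarith [hr.2]
      have h2 : φm ≤ φ D0 := hφm_le D0 ⟨hD0nn, le_refl D0⟩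
      have h3 : |φ r - φ D0| ≤ (L:ℝ) * ε0 :=
        le_trans hlip (mul_le_mul_of_nonneg_left h1 hLnn)
      have h4 : (L:ℝ) * ε0 ≤ φm / 2 := by
        rw [hε0_def, ← mul_div_assoc]
        rw [div_le_div_iff₀ (by positivity) (by norm_num)]
        nlinarith [hφm_pos, hLnn]
      have h5 := (abs_le.mp h3).1
      linarith
  set Φ := φ 0 + (L:ℝ) * (D0 + ε0) with hΦ_def
  have hΦ_ub : ∀ r ∈ Set.Icc (0:ℝ) (D0 + ε0), φ r ≤ Φ := by
    intro r hr
    have hlip := hφ_lip.dist_le_mul r 0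
    rw [Real.dist_eq, Real.dist_eq, sub_zero] at hlip
    have h1 : |r| ≤ D0 + ε0 := by rw [abs_of_nonneg hr.1]; exact hr.2
    have h2 := (abs_le.mp (le_trans hlip (mul_le_mul_of_nonneg_left h1 hLnn))).2
    rw [hΦ_def]; linarith
  have hφ0 : φm ≤ φ 0 := hφm_le 0 ⟨le_refl 0, hD0nn⟩
  have hΦpos : 0 < Φ := by
    rw [hΦ_def]
    have : 0 ≤ (L:ℝ) * (D0 + ε0) := mul_nonneg hLnn (by linarith)
    linarith
  have hφmΦ : φm ≤ Φ := by
    rw [hΦ_def]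
    have : 0 ≤ (L:ℝ) * (D0 + ε0) := mul_nonneg hLnn (by linarith)
    linarith
  -- the coefficient functions
  set a : Fin N → Fin N → ℝ → ℝ := fun i j s => M i j s * φ (|x i s - x j s|) / N with ha_def
  have ha_nonneg : ∀ i j s, |x i s - x j s| ≤ D0 + ε0 → 0 ≤ a i j s := by
    intro i j s h
    simp only [ha_def]
    exact div_nonneg (mul_nonneg (hM0 i j s) (hφ_nn _ ⟨abs_nonneg _, h⟩)) hNpos.le
  have ha_le : ∀ i j s, |x i s - x j s| ≤ D0 + ε0 → a i j s ≤ Φ / N := by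
    intro i j s h
    simp only [ha_def]
    apply (div_le_div_iff_of_pos_right hNpos).mpr
    calc M i j s * φ (|x i s - x j s|) ≤ 1 * Φ :=
        mul_le_mul (hM1 i j s) (hΦ_ub _ ⟨abs_nonneg _, h⟩) (hφ_nn _ ⟨abs_nonneg _, h⟩) zero_le_one
      _ = Φ := one_mul Φ
  have ha_lower : ∀ i j s, |x i s - x j s| ≤ D0 → M i j s * (φm / N) ≤ a i j s := by
    intro i j s h
    simp only [ha_def]
    rw [mul_div_assoc]
    exact mul_le_mul_of_nonneg_left
      ((div_le_div_iff_of_pos_right hNpos).mpr (hφm_le _ ⟨abs_nonneg _, h⟩)) (hM0 i j s)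
  -- the ODE in terms of a
  have hx' : ∀ i t, 0 ≤ t → HasDerivAt (x i) (∑ j, a i j t * (x j t - x i t)) t := by
    intro i t ht
    convert hx i t ht using 1
    rw [Finset.mul_sum]
    refine Finset.sum_congr rfl fun j _ => ?_
    simp only [ha_def]
    ring
  have hxc : ∀ (i : Fin N) (t : ℝ), 0 ≤ t → ContinuousAt (x i) t :=
    fun i t ht => (hx i t ht).continuousAt
  -- max and min
  set g : ℝ → ℝ := fun t => Finset.univ.sup' hne (fun i => x i t) with hg_def
  set m : ℝ → ℝ := fun t => Finset.univ.inf' hne (fun i => x i t) with hm_def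
  have hx_le_g : ∀ t i, x i t ≤ g t := fun t i => Finset.le_sup' (fun i => x i t) (Finset.mem_univ i)
  have hm_le_x : ∀ t i, m t ≤ x i t := fun t i => Finset.inf'_le (fun i => x i t) (Finset.mem_univ i)
  have hg_ex : ∀ t, ∃ i, g t = x i t := by
    intro t
    obtain ⟨i, -, h⟩ := Finset.exists_mem_eq_sup' hne (fun i => x i t)
    exact ⟨i, h⟩
  have hm_ex : ∀ t, ∃ i, m t = x i t := by
    intro t
    obtain ⟨i, -, h⟩ := Finset.exists_mem_eq_inf' hne (fun i => x i t)
    exact ⟨i, h⟩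
  have hgm_nn : ∀ t, 0 ≤ g t - m t := by
    intro t
    have i := Classical.arbitrary (Fin N)
    linarith [hx_le_g t i, hm_le_x t i]
  have hgm0 : g 0 - m 0 ≤ D0 := by
    obtain ⟨i, hi⟩ := hg_ex 0
    obtain ⟨j, hj⟩ := hm_ex 0
    rw [hi, hj]
    calc x i 0 - x j 0 ≤ |x i 0 - x j 0| := le_abs_self _
      _ ≤ D0 := hd0 i j
  -- Gronwall core: invariance of the box on intervals where distances stay moderate
  have gron : ∀ t0 t1, 0 ≤ t0 → t0 ≤ t1 →
      (∀ s ∈ Set.Icc t0 t1, ∀ i j, |x i s - x j s| ≤ D0 + ε0) →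
      ∀ s ∈ Set.Icc t0 t1, ∀ i, x i s ∈ Set.Icc (m t0) (g t0) := by
    intro t0 t1 ht0 h01 hreg
    set W : ℝ → ℝ := fun t => ∑ i, ((max (x i t - g t0) 0)^2 + (max (m t0 - x i t) 0)^2) with hW_def
    set W' : ℝ → ℝ := fun s => ∑ i, (2 * max (x i s - g t0) 0 * (∑ j, a i j s * (x j s - x i s))
        + 2 * max (m t0 - x i s) 0 * (-(∑ j, a i j s * (x j s - x i s)))) with hW'_def
    have hWd : ∀ s ∈ Set.Icc t0 t1, HasDerivAt W (W' s) s := by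
      intro s hs
      have hs0 : (0:ℝ) ≤ s := le_trans ht0 hs.1
      rw [hW_def, hW'_def]
      apply HasDerivAt.fun_sum
      intro i _
      have h1 : HasDerivAt (fun t => (max (x i t - g t0) 0)^2)
          (2 * max (x i s - g t0) 0 * (∑ j, a i j s * (x j s - x i s))) s := by
        have := (posPartSq_hasDerivAt (x i s - g t0)).comp s ((hx' i s hs0).sub_const (g t0))
        simpa [Function.comp_def] using this
      have h2 : HasDerivAt (fun t => (max (m t0 - x i t) 0)^2)
          (2 * max (m t0 - x i s) 0 * (-(∑ j, a i j s * (x j s - x i s)))) s := by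
        have := (posPartSq_hasDerivAt (m t0 - x i s)).comp s ((hx' i s hs0).const_sub (m t0))
        simpa [Function.comp_def] using this
      exact h1.add h2
    have hWcont : ContinuousOn W (Set.Icc t0 t1) :=
      fun s hs => ((hWd s hs).continuousAt).continuousWithinAt
    have hW0 : W t0 = 0 := by
      rw [hW_def]
      apply Finset.sum_eq_zero
      intro i _
      have h1 : x i t0 - g t0 ≤ 0 := sub_nonpos.2 (hx_le_g t0 i)
      have h2 : m t0 - x i t0 ≤ 0 := sub_nonpos.2 (hm_le_x t0 i)
      rw [max_eq_right h1, max_eq_right h2]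
      norm_num
    have hΦN : (0:ℝ) ≤ Φ/N := le_of_lt (div_pos hΦpos hNpos)
    have hbound : ∀ s ∈ Set.Ico t0 t1, W' s ≤ (2*Φ) * W s + 0 := by
      intro s hs
      have hregs := hreg s (Set.Ico_subset_Icc_self hs)
      have hub : ∀ i j : Fin N, 0 ≤ a i j s ∧ a i j s ≤ Φ/N :=
        fun i j => ⟨ha_nonneg i j s (hregs i j), ha_le i j s (hregs i j)⟩
      rw [hW'_def, hW_def]
      dsimp only
      have key : ∀ i : Fin N,
          2 * max (x i s - g t0) 0 * (∑ j, a i j s * (x j s - x i s))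
            + 2 * max (m t0 - x i s) 0 * (-(∑ j, a i j s * (x j s - x i s)))
          ≤ (Φ/N) * (∑ j, ((max (x i s - g t0) 0)^2 + (max (x j s - g t0) 0)^2))
            + (Φ/N) * (∑ j, ((max (m t0 - x i s) 0)^2 + (max (m t0 - x j s) 0)^2)) := by
        intro i
        apply add_le_add
        · calc 2 * max (x i s - g t0) 0 * (∑ j, a i j s * (x j s - x i s))
              = ∑ j, 2 * max (x i s - g t0) 0 * (a i j s * (x j s - x i s)) := by
                rw [Finset.mul_sum]
            _ ≤ ∑ j, (Φ/N) * ((max (x i s - g t0) 0)^2 + (max (x j s - g t0) 0)^2) := by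
                apply Finset.sum_le_sum
                intro j _
                have hc := cross_le_up (g t0) (x i s) (x j s)
                have hw : 0 ≤ max (x i s - g t0) 0 * max (x j s - g t0) 0 :=
                  mul_nonneg (le_max_right _ 0) (le_max_right _ 0)
                have h2 := mul_le_mul_aux (hub i j).1 (hub i j).2 hc hw
                have h3 : 2 * (max (x i s - g t0) 0 * max (x j s - g t0) 0)
                    ≤ (max (x i s - g t0) 0)^2 + (max (x j s - g t0) 0)^2 := by
                  nlinarith [sq_nonneg (max (x i s - g t0) 0 - max (x j s - g t0) 0)]
                have h4 := mul_le_mul_of_nonneg_left h3 hΦN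
                nlinarith [h2, h4]
            _ = (Φ/N) * (∑ j, ((max (x i s - g t0) 0)^2 + (max (x j s - g t0) 0)^2)) := by
                rw [Finset.mul_sum]
        · have hneg : -(∑ j, a i j s * (x j s - x i s)) = ∑ j, a i j s * (x i s - x j s) := by
            rw [← Finset.sum_neg_distrib]
            exact Finset.sum_congr rfl fun j _ => by ring
          calc 2 * max (m t0 - x i s) 0 * (-(∑ j, a i j s * (x j s - x i s)))
              = ∑ j, 2 * max (m t0 - x i s) 0 * (a i j s * (x i s - x j s)) := by
                rw [hneg, Finset.mul_sum]
            _ ≤ ∑ j, (Φ/N) * ((max (m t0 - x i s) 0)^2 + (max (m t0 - x j s) 0)^2) := by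
                apply Finset.sum_le_sum
                intro j _
                have hc := cross_le_dn (m t0) (x i s) (x j s)
                have hw : 0 ≤ max (m t0 - x i s) 0 * max (m t0 - x j s) 0 :=
                  mul_nonneg (le_max_right _ 0) (le_max_right _ 0)
                have h2 := mul_le_mul_aux (hub i j).1 (hub i j).2 hc hw
                have h3 : 2 * (max (m t0 - x i s) 0 * max (m t0 - x j s) 0)
                    ≤ (max (m t0 - x i s) 0)^2 + (max (m t0 - x j s) 0)^2 := by
                  nlinarith [sq_nonneg (max (m t0 - x i s) 0 - max (m t0 - x j s) 0)]
                have h4 := mul_le_mul_of_nonneg_left h3 hΦN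
                nlinarith [h2, h4]
            _ = (Φ/N) * (∑ j, ((max (m t0 - x i s) 0)^2 + (max (m t0 - x j s) 0)^2)) := by
                rw [Finset.mul_sum]
      have hsumc : ∀ w : Fin N → ℝ,
          ∑ i, ((Φ/N) * (∑ j, (w i^2 + w j^2))) = Φ * (∑ i, w i^2) + Φ * (∑ i, w i^2) := by
        intro w
        have h1 : ∀ i : Fin N, ∑ j : Fin N, (w i^2 + w j^2) = (N:ℝ) * w i^2 + ∑ j, w j^2 := by
          intro i
          rw [Finset.sum_add_distrib, Finset.sum_const, Finset.card_univ, Fintype.card_fin,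
            nsmul_eq_mul]
        calc ∑ i, ((Φ/N) * (∑ j : Fin N, (w i^2 + w j^2)))
            = ∑ i : Fin N, (Φ * w i^2 + (Φ/N) * ∑ j, w j^2) := by
              refine Finset.sum_congr rfl fun i _ => ?_
              rw [h1 i]
              field_simp
          _ = Φ * (∑ i, w i^2) + (N:ℝ) * ((Φ/N) * ∑ j, w j^2) := by
              rw [Finset.sum_add_distrib, Finset.sum_const, Finset.card_univ, Fintype.card_fin,
                nsmul_eq_mul, ← Finset.mul_sum]
          _ = Φ * (∑ i, w i^2) + Φ * (∑ i, w i^2) := by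
              congr 1
              field_simp
        -- end hsumc
      calc (∑ i, (2 * max (x i s - g t0) 0 * (∑ j, a i j s * (x j s - x i s))
              + 2 * max (m t0 - x i s) 0 * (-(∑ j, a i j s * (x j s - x i s)))))
          ≤ ∑ i, ((Φ/N) * (∑ j, ((max (x i s - g t0) 0)^2 + (max (x j s - g t0) 0)^2))
              + (Φ/N) * (∑ j, ((max (m t0 - x i s) 0)^2 + (max (m t0 - x j s) 0)^2))) :=
            Finset.sum_le_sum fun i _ => key i
        _ = (∑ i, ((Φ/N) * (∑ j, ((max (x i s - g t0) 0)^2 + (max (x j s - g t0) 0)^2))))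
            + (∑ i, ((Φ/N) * (∑ j, ((max (m t0 - x i s) 0)^2 + (max (m t0 - x j s) 0)^2)))) := by
            rw [Finset.sum_add_distrib]
        _ = (Φ * (∑ i, (max (x i s - g t0) 0)^2) + Φ * (∑ i, (max (x i s - g t0) 0)^2))
            + (Φ * (∑ i, (max (m t0 - x i s) 0)^2) + Φ * (∑ i, (max (m t0 - x i s) 0)^2)) := by
            rw [hsumc (fun i => max (x i s - g t0) 0), hsumc (fun i => max (m t0 - x i s) 0)]
        _ = (2*Φ) * (∑ i, ((max (x i s - g t0) 0)^2 + (max (m t0 - x i s) 0)^2)) + 0 := by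
            rw [Finset.sum_add_distrib]
            ring
    have hmain := le_gronwallBound_of_liminf_deriv_right_le (δ := 0) (K := 2*Φ) (ε := 0)
      hWcont
      (fun s hs r hr =>
        ((hWd s (Set.Ico_subset_Icc_self hs)).hasDerivWithinAt.liminf_right_slope_le hr))
      (le_of_eq hW0) hbound
    intro s hs i
    have hWs := hmain s hs
    rw [gronwallBound_ε0_δ0] at hWs
    have hWnn : (0:ℝ) ≤ W s := by
      rw [hW_def]
      apply Finset.sum_nonneg
      intro i _
      positivity
    have hWeq : W s = 0 := le_antisymm hWs hWnn
    rw [hW_def] at hWeq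
    have hterm := (Finset.sum_eq_zero_iff_of_nonneg
      (fun i _ => by positivity)).mp hWeq i (Finset.mem_univ i)
    have hA : (max (x i s - g t0) 0)^2 = 0 := by
      nlinarith [sq_nonneg (max (m t0 - x i s) 0), sq_nonneg (max (x i s - g t0) 0)]
    have hB : (max (m t0 - x i s) 0)^2 = 0 := by
      nlinarith [sq_nonneg (max (m t0 - x i s) 0), sq_nonneg (max (x i s - g t0) 0)]
    have hA' : max (x i s - g t0) 0 = 0 := by
      have := pow_eq_zero_iff (n := 2) (by norm_num) |>.mp hA
      exact this
    have hB' : max (m t0 - x i s) 0 = 0 := by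
      have := pow_eq_zero_iff (n := 2) (by norm_num) |>.mp hB
      exact this
    constructor
    · linarith [le_max_left (m t0 - x i s) 0, hB'.le, hB'.ge]
    · linarith [le_max_left (x i s - g t0) 0, hA'.le, hA'.ge]
  -- invariance of the box from any admissible start
  have inv0 : ∀ t0, 0 ≤ t0 → g t0 - m t0 ≤ D0 →
      ∀ t, t0 ≤ t → ∀ i, x i t ∈ Set.Icc (m t0) (g t0) := by
    intro t0 ht0 hD
    by_contra hcon
    push_neg at hcon
    obtain ⟨t, ht, i, hi⟩ := hcon
    set Bad : Set ℝ := {t : ℝ | t0 ≤ t ∧ ∃ i, x i t ∉ Set.Icc (m t0) (g t0)} with hBad_def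
    have hBadne : Bad.Nonempty := ⟨t, ht, i, hi⟩
    have hbdd : BddBelow Bad := ⟨t0, fun b hb => hb.1⟩
    set τ := sInf Bad with hτ_def
    have hτ_ge : t0 ≤ τ := le_csInf hBadne (fun b hb => hb.1)
    have hτ0 : 0 ≤ τ := le_trans ht0 hτ_ge
    have good_lt : ∀ s, t0 ≤ s → s < τ → ∀ i, x i s ∈ Set.Icc (m t0) (g t0) := by
      intro s hs hsτ i
      by_contra hbad
      exact absurd (csInf_le hbdd ⟨hs, i, hbad⟩) (not_le.2 hsτ)
    have good_τ : ∀ i, x i τ ∈ Set.Icc (m t0) (g t0) := by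
      rcases eq_or_lt_of_le hτ_ge with h | h
      · intro i
        rw [← h]
        exact ⟨hm_le_x t0 i, hx_le_g t0 i⟩
      · intro i
        have htend : Tendsto (x i) (nhdsWithin τ (Set.Iio τ)) (nhds (x i τ)) :=
          ((hxc i τ hτ0).tendsto).mono_left nhdsWithin_le_nhds
        have hev : ∀ᶠ s in nhdsWithin τ (Set.Iio τ), x i s ∈ Set.Icc (m t0) (g t0) := by
          filter_upwards [Ioo_mem_nhdsLT_of_mem (⟨h, le_refl τ⟩ : τ ∈ Set.Ioc t0 τ)] with s hs
          exact good_lt s hs.1.le hs.2 i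
        exact isClosed_Icc.mem_of_tendsto htend hev
    have hdτ : ∀ i j : Fin N, |x i τ - x j τ| < D0 + ε0 := by
      intro i j
      have h1 := good_τ i
      have h2 := good_τ j
      have h3 : |x i τ - x j τ| ≤ g t0 - m t0 := by
        rw [abs_sub_le_iff]
        constructor <;> linarith [h1.1, h1.2, h2.1, h2.2]
      linarith
    have hevn : ∀ᶠ s in nhds τ, ∀ i j : Fin N, |x i s - x j s| < D0 + ε0 := by
      rw [eventually_all]
      intro i
      rw [eventually_all]
      intro j
      have hc : ContinuousAt (fun s => |x i s - x j s|) τ := ((hxc i τ hτ0).sub (hxc j τ hτ0)).abs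
      exact hc.tendsto.eventually_lt_const (hdτ i j)
    obtain ⟨δ, hδpos, hδ⟩ := Metric.eventually_nhds_iff.mp hevn
    have hreg : ∀ s ∈ Set.Icc t0 (τ + δ/2), ∀ i j, |x i s - x j s| ≤ D0 + ε0 := by
      intro s hs i j
      rcases le_or_gt s τ with h | h
      · rcases eq_or_lt_of_le h with he | hlt
        · rw [he]
          exact (hdτ i j).le
        · have hb1 := good_lt s hs.1 hlt i
          have hb2 := good_lt s hs.1 hlt j
          have h3 : |x i s - x j s| ≤ g t0 - m t0 := by
            rw [abs_sub_le_iff]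
            constructor <;> linarith [hb1.1, hb1.2, hb2.1, hb2.2]
          linarith
      · have hd : dist s τ < δ := by
          rw [Real.dist_eq, abs_of_pos (by linarith)]
          linarith [hs.2]
        exact (hδ hd i j).le
    have hbox := gron t0 (τ + δ/2) ht0 (by linarith) hreg
    have h2 : τ + δ/2 ≤ sInf Bad := by
      apply le_csInf hBadne
      intro b hb
      by_contra hb2
      push_neg at hb2
      obtain ⟨ib, hib⟩ := hb.2
      exact hib (hbox b ⟨hb.1, hb2.le⟩ ib)
    rw [← hτ_def] at h2
    linarith
  have hD0all : ∀ t0, 0 ≤ t0 → g t0 - m t0 ≤ D0 := by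
    intro t0 ht0
    obtain ⟨i, hi⟩ := hg_ex t0
    obtain ⟨j, hj⟩ := hm_ex t0
    have bi := inv0 0 le_rfl hgm0 t0 ht0 i
    have bj := inv0 0 le_rfl hgm0 t0 ht0 j
    rw [hi, hj]
    linarith [bi.2, bj.1, hgm0]
  have hinv : ∀ t0, 0 ≤ t0 → ∀ t, t0 ≤ t → ∀ i, x i t ∈ Set.Icc (m t0) (g t0) :=
    fun t0 ht0 => inv0 t0 ht0 (hD0all t0 ht0)
  have hmono : ∀ t0 t, 0 ≤ t0 → t0 ≤ t → g t - m t ≤ g t0 - m t0 := by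
    intro t0 t ht0 htt
    obtain ⟨i, hi⟩ := hg_ex t
    obtain ⟨j, hj⟩ := hm_ex t
    have bi := hinv t0 ht0 t htt i
    have bj := hinv t0 ht0 t htt j
    rw [hi, hj]
    linarith [bi.2, bj.1]
  -- integrability helper
  have hII : ∀ (i j : Fin N) (t0 t1 : ℝ) (b : ℝ → ℝ), t0 ≤ t1 → ContinuousOn b (Set.Icc t0 t1) →
      IntervalIntegrable (fun s => M i j s * b s) volume t0 t1 := by
    intro i j t0 t1 b h01 hb
    rw [intervalIntegrable_iff_integrableOn_Ioc_of_le h01]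
    obtain ⟨C, hC⟩ := isCompact_Icc.exists_bound_of_continuousOn hb
    have hmeas : AEStronglyMeasurable (fun s => M i j s * b s) (volume.restrict (Set.Ioc t0 t1)) :=
      ((hM_meas i j).aestronglyMeasurable.restrict).mul
        ((hb.mono Set.Ioc_subset_Icc_self).aestronglyMeasurable measurableSet_Ioc)
    refine Integrable.mono' (g := fun _ => C)
      ((integrableOn_const_iff (by finiteness)).2 (Or.inr measure_Ioc_lt_top)) hmeas ?_
    filter_upwards [ae_restrict_mem measurableSet_Ioc] with s hs
    have h1 : ‖M i j s * b s‖ = M i j s * |b s| := by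
      rw [Real.norm_eq_abs, abs_mul, abs_of_nonneg (hM0 i j s)]
    rw [h1]
    calc M i j s * |b s| ≤ 1 * C := by
          apply mul_le_mul (hM1 i j s) ?_ (abs_nonneg _) zero_le_one
          have := hC s (Set.Ioc_subset_Icc_self hs)
          rwa [Real.norm_eq_abs] at this
      _ = C := one_mul C
  -- the contraction constant
  set c : ℝ := (μ * φm / N) * (Real.exp (-(Φ*T)))^2 with hc_def
  have hcpos : 0 < c := by
    rw [hc_def]
    positivity
  -- contraction over windows of length T
  have contract : ∀ t0, 0 ≤ t0 → g (t0+T) - m (t0+T) ≤ (1 - c) * (g t0 - m t0) := by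
    intro t0 ht0
    have hDtnn : 0 ≤ g t0 - m t0 := hgm_nn t0
    have box : ∀ t, t0 ≤ t → ∀ i, x i t ∈ Set.Icc (m t0) (g t0) := hinv t0 ht0
    have hdistD0 : ∀ t, t0 ≤ t → ∀ i j : Fin N, |x i t - x j t| ≤ D0 := by
      intro t ht i j
      have b1 := box t ht i
      have b2 := box t ht j
      have hD := hD0all t0 ht0
      rw [abs_sub_le_iff]
      constructor <;> linarith [b1.1, b1.2, b2.1, b2.2]
    -- derivative of the auxiliary function
    have hF : ∀ (i : Fin N) (t : ℝ), 0 ≤ t →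
        HasDerivAt (fun t => Real.exp (Φ*(t - t0)) * (g t0 - x i t))
          (Real.exp (Φ*(t - t0)) * (Φ*(g t0 - x i t) - ∑ j, a i j t * (x j t - x i t))) t := by
      intro i t ht
      have he : HasDerivAt (fun t : ℝ => Real.exp (Φ*(t - t0))) (Real.exp (Φ*(t - t0)) * Φ) t := by
        simpa using (((hasDerivAt_id t).sub_const t0).const_mul Φ).exp
      have hi : HasDerivAt (fun t => g t0 - x i t) (-(∑ j, a i j t * (x j t - x i t))) t :=
        (hx' i t ht).const_sub (g t0)
      have := he.mul hi
      have e : Real.exp (Φ*(t - t0)) * (Φ*(g t0 - x i t) - ∑ j, a i j t * (x j t - x i t))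
          = Real.exp (Φ*(t - t0)) * Φ * (g t0 - x i t)
            + Real.exp (Φ*(t - t0)) * (-(∑ j, a i j t * (x j t - x i t))) := by ring
      rw [e]
      exact this
    -- integrability of the derivative
    have hFint : ∀ (i : Fin N) (u : ℝ), t0 ≤ u → IntervalIntegrable
        (fun t => Real.exp (Φ*(t - t0)) * (Φ*(g t0 - x i t) - ∑ j, a i j t * (x j t - x i t)))
        volume t0 u := by
      intro i u hu
      have hxcont : ∀ k : Fin N, ContinuousOn (x k) (Set.Icc t0 u) :=
        fun k s hs => (hxc k s (le_trans ht0 hs.1)).continuousWithinAt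
      have hexp : Continuous fun t : ℝ => Real.exp (Φ*(t - t0)) := by
        fun_prop
      have hpart1 : IntervalIntegrable (fun t => Real.exp (Φ*(t - t0)) * (Φ*(g t0 - x i t)))
          volume t0 u := by
        apply ContinuousOn.intervalIntegrable
        rw [Set.uIcc_of_le hu]
        exact hexp.continuousOn.mul (continuousOn_const.mul (continuousOn_const.sub (hxcont i)))
      have hpart2 : IntervalIntegrable
          (fun t => ∑ j, M i j t * (Real.exp (Φ*(t - t0)) * (φ (|x i t - x j t|) * (x j t - x i t) / N)))
          volume t0 u := by
        have hj : ∀ j : Fin N, IntervalIntegrable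
            (fun t => M i j t * (Real.exp (Φ*(t - t0)) * (φ (|x i t - x j t|) * (x j t - x i t) / N)))
            volume t0 u := by
          intro j
          apply hII i j t0 u _ hu
          exact hexp.continuousOn.mul
            (((hφ_lip.continuous.comp_continuousOn (((hxcont i).sub (hxcont j)).abs)).mul
              ((hxcont j).sub (hxcont i))).div_const (N:ℝ))
        have hsum := IntervalIntegrable.sum Finset.univ (fun j _ => hj j)
        have heq2 : (fun t => ∑ j, M i j t * (Real.exp (Φ*(t - t0)) * (φ (|x i t - x j t|) * (x j t - x i t) / N)))
            = ∑ j : Fin N, fun t => M i j t * (Real.exp (Φ*(t - t0)) * (φ (|x i t - x j t|) * (x j t - x i t) / N)) := by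
          funext t
          simp
        rw [heq2]
        exact hsum
      have heq : (fun t => Real.exp (Φ*(t - t0)) * (Φ*(g t0 - x i t) - ∑ j, a i j t * (x j t - x i t)))
          = fun t => Real.exp (Φ*(t - t0)) * (Φ*(g t0 - x i t))
            - ∑ j, M i j t * (Real.exp (Φ*(t - t0)) * (φ (|x i t - x j t|) * (x j t - x i t) / N)) := by
        funext t
        rw [mul_sub, Finset.mul_sum]
        congr 1
        refine Finset.sum_congr rfl fun j _ => ?_
        simp only [ha_def]
        ring
      rw [heq]
      exact hpart1.sub hpart2
    -- lower bound on g t0 - x k, where k is the argmin at t0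
    obtain ⟨k, -, hk⟩ := Finset.exists_mem_eq_inf' hne (fun i => x i t0)
    have hkm : m t0 = x k t0 := hk
    have hptk : ∀ s ∈ Set.Icc t0 (t0+T),
        0 ≤ Real.exp (Φ*(s - t0)) * (Φ*(g t0 - x k s) - ∑ j, a k j s * (x j s - x k s)) := by
      intro s hs
      have hboxs := box s hs.1
      have hsum : ∑ j, a k j s * (x j s - x k s) ≤ Φ * (g t0 - x k s) := by
        have hterm : ∀ j : Fin N, a k j s * (x j s - x k s) ≤ (Φ/N) * (g t0 - x k s) := by
          intro j
          exact mul_le_mul_aux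
            (ha_nonneg k j s (le_trans (hdistD0 s hs.1 k j) (by linarith)))
            (ha_le k j s (le_trans (hdistD0 s hs.1 k j) (by linarith)))
            (by linarith [(hboxs j).2])
            (by linarith [(hboxs k).2])
        calc ∑ j, a k j s * (x j s - x k s)
            ≤ ∑ _j : Fin N, (Φ/N) * (g t0 - x k s) := Finset.sum_le_sum fun j _ => hterm j
          _ = (N:ℝ) * ((Φ/N) * (g t0 - x k s)) := by
              rw [Finset.sum_const, Finset.card_univ, Fintype.card_fin, nsmul_eq_mul]
          _ = Φ * (g t0 - x k s) := by field_simp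
      have h0 : 0 ≤ Φ*(g t0 - x k s) - ∑ j, a k j s * (x j s - x k s) := by linarith
      exact mul_nonneg (Real.exp_pos _).le h0
    have hstepk : ∀ u ∈ Set.Icc t0 (t0+T),
        (g t0 - m t0) * Real.exp (-(Φ*T)) ≤ g t0 - x k u := by
      intro u hu
      have hders : ∀ s ∈ Set.uIcc t0 u, HasDerivAt (fun t => Real.exp (Φ*(t - t0)) * (g t0 - x k t))
          (Real.exp (Φ*(s - t0)) * (Φ*(g t0 - x k s) - ∑ j, a k j s * (x j s - x k s))) s := by
        rw [Set.uIcc_of_le hu.1]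
        intro s hs
        exact hF k s (le_trans ht0 hs.1)
      have hftc := intervalIntegral.integral_eq_sub_of_hasDerivAt hders (hFint k u hu.1)
      have hnn : 0 ≤ ∫ s in t0..u,
          Real.exp (Φ*(s - t0)) * (Φ*(g t0 - x k s) - ∑ j, a k j s * (x j s - x k s)) :=
        intervalIntegral.integral_nonneg hu.1 (fun s hs => hptk s ⟨hs.1, le_trans hs.2 hu.2⟩)
      rw [hftc] at hnn
      have hF0 : Real.exp (Φ*(t0 - t0)) * (g t0 - x k t0) = g t0 - m t0 := by
        rw [sub_self, mul_zero, Real.exp_zero, one_mul, ← hkm]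
      have h1 : g t0 - m t0 ≤ Real.exp (Φ*(u - t0)) * (g t0 - x k u) := by
        linarith [hnn, hF0]
      have e1 : Real.exp (Φ*(u - t0)) ≤ Real.exp (Φ*T) :=
        Real.exp_le_exp.mpr (mul_le_mul_of_nonneg_left (by linarith [hu.2]) hΦpos.le)
      have hz : 0 ≤ g t0 - x k u := by linarith [(box u hu.1 k).2]
      have h3 : g t0 - m t0 ≤ Real.exp (Φ*T) * (g t0 - x k u) :=
        le_trans h1 (mul_le_mul_of_nonneg_right e1 hz)
      calc (g t0 - m t0) * Real.exp (-(Φ*T))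
          ≤ (Real.exp (Φ*T) * (g t0 - x k u)) * Real.exp (-(Φ*T)) :=
            mul_le_mul_of_nonneg_right h3 (Real.exp_pos _).le
        _ = (g t0 - x k u) * (Real.exp (Φ*T) * Real.exp (-(Φ*T))) := by ring
        _ = g t0 - x k u := by
            rw [← Real.exp_add]
            simp
    -- pointwise lower bound for the forcing
    have hpti : ∀ (i : Fin N), ∀ s ∈ Set.Icc t0 (t0+T),
        M i k s * ((φm/N) * ((g t0 - m t0) * Real.exp (-(Φ*T)))) ≤
        Real.exp (Φ*(s - t0)) * (Φ*(g t0 - x i s) - ∑ j, a i j s * (x j s - x i s)) := by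
      intro i s hs
      have hboxs := box s hs.1
      have hDcnn : 0 ≤ (g t0 - m t0) * Real.exp (-(Φ*T)) :=
        mul_nonneg hDtnn (Real.exp_pos _).le
      have hzk : (g t0 - m t0) * Real.exp (-(Φ*T)) ≤ g t0 - x k s := hstepk s hs
      have ha0T : ∀ j : Fin N, 0 ≤ a i j s ∧ a i j s ≤ Φ/N := fun j =>
        ⟨ha_nonneg i j s (le_trans (hdistD0 s hs.1 i j) (by linarith)),
         ha_le i j s (le_trans (hdistD0 s hs.1 i j) (by linarith))⟩
      have hterm : ∀ j : Fin N, a i j s * (x j s - x i s) ≤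
          (Φ/N) * (g t0 - x i s) - (if j = k then a i k s * ((g t0 - m t0) * Real.exp (-(Φ*T))) else 0) := by
        intro j
        by_cases hjk : j = k
        · subst hjk
          rw [if_pos rfl]
          have h1 : x j s - x i s ≤ (g t0 - x i s) - (g t0 - m t0) * Real.exp (-(Φ*T)) := by
            linarith [hzk]
          have h2 := mul_le_mul_of_nonneg_left h1 (ha0T j).1
          have h3 : a i j s * (g t0 - x i s) ≤ (Φ/N) * (g t0 - x i s) :=
            mul_le_mul_of_nonneg_right (ha0T j).2 (by linarith [(hboxs i).2])
          nlinarith [h2, h3]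
        · rw [if_neg hjk, sub_zero]
          exact mul_le_mul_aux (ha0T j).1 (ha0T j).2
            (by linarith [(hboxs j).2]) (by linarith [(hboxs i).2])
      have hsum : ∑ j, a i j s * (x j s - x i s) ≤
          Φ * (g t0 - x i s) - a i k s * ((g t0 - m t0) * Real.exp (-(Φ*T))) := by
        calc ∑ j, a i j s * (x j s - x i s)
            ≤ ∑ j, ((Φ/N) * (g t0 - x i s)
              - (if j = k then a i k s * ((g t0 - m t0) * Real.exp (-(Φ*T))) else 0)) :=
              Finset.sum_le_sum fun j _ => hterm j
          _ = (N:ℝ) * ((Φ/N) * (g t0 - x i s))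
              - a i k s * ((g t0 - m t0) * Real.exp (-(Φ*T))) := by
              rw [Finset.sum_sub_distrib, Finset.sum_const, Finset.card_univ, Fintype.card_fin,
                nsmul_eq_mul]
              congr 1
              simp
          _ = Φ * (g t0 - x i s) - a i k s * ((g t0 - m t0) * Real.exp (-(Φ*T))) := by
              congr 1
              field_simp
      have h4 : a i k s * ((g t0 - m t0) * Real.exp (-(Φ*T))) ≤
          Φ*(g t0 - x i s) - ∑ j, a i j s * (x j s - x i s) := by linarith [hsum]
      have h5 : 1 ≤ Real.exp (Φ*(s - t0)) := by
        rw [← Real.exp_zero]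
        exact Real.exp_le_exp.mpr (mul_nonneg hΦpos.le (by linarith [hs.1]))
      have hnn2 : 0 ≤ a i k s * ((g t0 - m t0) * Real.exp (-(Φ*T))) :=
        mul_nonneg (ha0T k).1 hDcnn
      have h7 : a i k s * ((g t0 - m t0) * Real.exp (-(Φ*T))) ≤
          Real.exp (Φ*(s - t0)) * (Φ*(g t0 - x i s) - ∑ j, a i j s * (x j s - x i s)) := by
        calc a i k s * ((g t0 - m t0) * Real.exp (-(Φ*T)))
            = 1 * (a i k s * ((g t0 - m t0) * Real.exp (-(Φ*T)))) := (one_mul _).symm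
          _ ≤ Real.exp (Φ*(s - t0)) * (a i k s * ((g t0 - m t0) * Real.exp (-(Φ*T)))) :=
              mul_le_mul_of_nonneg_right h5 hnn2
          _ ≤ Real.exp (Φ*(s - t0)) * (Φ*(g t0 - x i s) - ∑ j, a i j s * (x j s - x i s)) :=
              mul_le_mul_of_nonneg_left h4 (Real.exp_pos _).le
      have h6 : M i k s * ((φm/N) * ((g t0 - m t0) * Real.exp (-(Φ*T)))) ≤
          a i k s * ((g t0 - m t0) * Real.exp (-(Φ*T))) := by
        rw [← mul_assoc]
        exact mul_le_mul_of_nonneg_right (ha_lower i k s (hdistD0 s hs.1 i k)) hDcnn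
      exact le_trans h6 h7
    -- integrate the forcing over the window
    have hstepi : ∀ i : Fin N, c * (g t0 - m t0) ≤ g t0 - x i (t0+T) := by
      intro i
      have hT0 : t0 ≤ t0 + T := by linarith
      have hders : ∀ s ∈ Set.uIcc t0 (t0+T),
          HasDerivAt (fun t => Real.exp (Φ*(t - t0)) * (g t0 - x i t))
          (Real.exp (Φ*(s - t0)) * (Φ*(g t0 - x i s) - ∑ j, a i j s * (x j s - x i s))) s := by
        rw [Set.uIcc_of_le hT0]
        intro s hs
        exact hF i s (le_trans ht0 hs.1)
      have hftc := intervalIntegral.integral_eq_sub_of_hasDerivAt hders (hFint i (t0+T) hT0)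
      have hIl1 : ∫ s in t0..(t0+T), M i k s * ((φm/N) * ((g t0 - m t0) * Real.exp (-(Φ*T))))
          ≤ ∫ s in t0..(t0+T),
            Real.exp (Φ*(s - t0)) * (Φ*(g t0 - x i s) - ∑ j, a i j s * (x j s - x i s)) :=
        intervalIntegral.integral_mono_on hT0
          (hII i k t0 (t0+T) _ hT0 continuousOn_const) (hFint i (t0+T) hT0)
          (fun s hs => hpti i s hs)
      have hIl2 : ∫ s in t0..(t0+T), M i k s * ((φm/N) * ((g t0 - m t0) * Real.exp (-(Φ*T))))
          = (∫ s in t0..(t0+T), M i k s) * ((φm/N) * ((g t0 - m t0) * Real.exp (-(Φ*T)))) :=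
        intervalIntegral.integral_mul_const _ _
      have hPEi := hPE i k t0 ht0
      have hCnn : 0 ≤ (φm/N) * ((g t0 - m t0) * Real.exp (-(Φ*T))) := by positivity
      have hIl3 : μ * ((φm/N) * ((g t0 - m t0) * Real.exp (-(Φ*T)))) ≤
          (∫ s in t0..(t0+T), M i k s) * ((φm/N) * ((g t0 - m t0) * Real.exp (-(Φ*T)))) :=
        mul_le_mul_of_nonneg_right hPEi hCnn
      have hinit : 0 ≤ g t0 - x i t0 := by linarith [(box t0 le_rfl i).2]
      have hF0 : Real.exp (Φ*(t0 - t0)) * (g t0 - x i t0) = g t0 - x i t0 := by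
        rw [sub_self, mul_zero, Real.exp_zero, one_mul]
      have hcomb : μ * ((φm/N) * ((g t0 - m t0) * Real.exp (-(Φ*T)))) ≤
          Real.exp (Φ*(t0+T - t0)) * (g t0 - x i (t0+T)) := by
        rw [hftc] at hIl1
        rw [hIl2] at hIl1
        linarith [hIl3, hIl1, hF0, hinit]
      have he2 : Real.exp (Φ*(t0+T - t0)) = Real.exp (Φ*T) := by
        congr 1
        ring
      rw [he2] at hcomb
      have hz : 0 ≤ g t0 - x i (t0+T) := by linarith [(box (t0+T) hT0 i).2]
      have hfinal := mul_le_mul_of_nonneg_right hcomb (Real.exp_pos (-(Φ*T))).le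
      have he3 : Real.exp (Φ*T) * (g t0 - x i (t0+T)) * Real.exp (-(Φ*T)) = g t0 - x i (t0+T) := by
        rw [mul_comm (Real.exp (Φ*T)) _, mul_assoc, ← Real.exp_add]
        simp
      rw [he3] at hfinal
      calc c * (g t0 - m t0)
          = μ * ((φm/N) * ((g t0 - m t0) * Real.exp (-(Φ*T)))) * Real.exp (-(Φ*T)) := by
            rw [hc_def]
            ring
        _ ≤ g t0 - x i (t0+T) := hfinal
    -- conclude
    obtain ⟨i1, hi1⟩ := hg_ex (t0+T)
    obtain ⟨j1, hj1⟩ := hm_ex (t0+T)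
    have h1 := hstepi i1
    have h2 : m t0 ≤ x j1 (t0+T) := (box (t0+T) (by linarith) j1).1
    rw [hi1, hj1]
    linarith [h1, h2]
  -- c < 1
  have hc1 : c < 1 := by
    have i00 : Fin N := ⟨0, hN0⟩
    have hμT : μ ≤ T := by
      have h1 := hPE i00 i00 0 le_rfl
      have h2 : ∫ s in (0:ℝ)..(0+T), M i00 i00 s ≤ ∫ s in (0:ℝ)..(0+T), (1:ℝ) := by
        apply intervalIntegral.integral_mono_on (by linarith)
        · have := hII i00 i00 0 (0+T) (fun _ => 1) (by linarith) continuousOn_const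
          simpa using this
        · exact intervalIntegrable_const
        · intro s _
          exact hM1 i00 i00 s
      have h3 : ∫ s in (0:ℝ)..(0+T), (1:ℝ) = T := by simp
      linarith
    have e1 : 2*Φ*T ≤ Real.exp (2*Φ*T) := by
      linarith [Real.add_one_le_exp (2*Φ*T)]
    have e2 : (Real.exp (-(Φ*T)))^2 = (Real.exp (2*Φ*T))⁻¹ := by
      rw [sq, ← Real.exp_add, ← Real.exp_neg]
      congr 1
      ring
    have hposΦT : (0:ℝ) < 2*Φ*T := by positivity
    have e3 : (Real.exp (2*Φ*T))⁻¹ ≤ (2*Φ*T)⁻¹ := by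
      apply inv_anti₀ hposΦT e1
    have hcle : c ≤ (T * Φ / N) * (2*Φ*T)⁻¹ := by
      rw [hc_def, e2]
      apply mul_le_mul ?_ e3 (by positivity) (by positivity)
      exact (div_le_div_iff_of_pos_right hNpos).mpr (mul_le_mul hμT hφmΦ hφm_pos.le (by linarith))
    have : (T * Φ / N) * (2*Φ*T)⁻¹ = 1 / (2*N) := by
      field_simp
    rw [this] at hcle
    have : 1 / (2*(N:ℝ)) ≤ 1/4 := by
      apply div_le_div_of_nonneg_left (by norm_num) (by norm_num) ?_
      linarith
    linarith
  -- final convergence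
  intro i0 j0
  rw [Metric.tendsto_atTop]
  intro ε hε
  have hDn : ∀ n : ℕ, g (n*T) - m (n*T) ≤ (1-c)^n * (g 0 - m 0) := by
    intro n
    induction n with
    | zero => simp
    | succ n ih =>
      have hnT : (0:ℝ) ≤ n*T := by positivity
      have h1 := contract (n*T) hnT
      have h2 : ((n+1 : ℕ):ℝ)*T = n*T + T := by push_cast; ring
      calc g (((n+1 : ℕ):ℝ)*T) - m (((n+1 : ℕ):ℝ)*T)
          = g ((n:ℝ)*T + T) - m ((n:ℝ)*T + T) := by rw [h2]
        _ ≤ (1-c)*(g ((n:ℝ)*T) - m ((n:ℝ)*T)) := h1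
        _ ≤ (1-c)*((1-c)^n * (g 0 - m 0)) :=
            mul_le_mul_of_nonneg_left ih (by linarith)
        _ = (1-c)^(n+1) * (g 0 - m 0) := by ring
  have htend : Tendsto (fun n : ℕ => (1-c)^n * (g 0 - m 0)) atTop (nhds 0) := by
    have h1 := tendsto_pow_atTop_nhds_zero_of_lt_one
      (r := 1-c) (by linarith [hc1] : (0:ℝ) ≤ 1-c) (by linarith [hcpos] : 1-c < 1)
    have := h1.mul_const (g 0 - m 0)
    simpa using this
  have hevn : ∀ᶠ n : ℕ in atTop, (1-c)^n * (g 0 - m 0) < ε := htend.eventually_lt_const hε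
  obtain ⟨n, hn⟩ := hevn.exists
  refine ⟨n*T, fun t ht => ?_⟩
  have hnT0 : (0:ℝ) ≤ n*T := by positivity
  have ht0 : (0:ℝ) ≤ t := le_trans hnT0 ht
  have hb1 : g t - m t ≤ g ((n:ℝ)*T) - m ((n:ℝ)*T) := hmono ((n:ℝ)*T) t hnT0 ht
  have habs : |x i0 t - x j0 t| ≤ g t - m t := by
    rw [abs_sub_le_iff]
    constructor <;> linarith [hx_le_g t i0, hm_le_x t i0, hx_le_g t j0, hm_le_x t j0]
  rw [Real.dist_eq, sub_zero]
  calc |x i0 t - x j0 t| ≤ g t - m t := habs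
    _ ≤ g ((n:ℝ)*T) - m ((n:ℝ)*T) := hb1
    _ ≤ (1-c)^n * (g 0 - m 0) := hDn n
    _ < ε := hn
end

section
/- Let x_i : [0,∞) → R^d solve dx_i/dt = (λ_i/N) Σ_j M_{ij}(t) φ(|x_i − x_j|)(x_j − x_i) under the hypotheses: φ Lipschitz, φ_min := min{φ(r) : 0 ≤ r ≤ D(0)} > 0, each M_{ij} : [0,∞) → [0,1] measurable with ∫_t^{t+T} M_{ij}(s) ds ≥ μ for all t ≥ 0, and λ_i ≡ 1. Then all agents converge to a common limit point x* ∈ R^d: lim_{t→∞} x_i(t) = x* for every i. -/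
set_option maxHeartbeats 4000000

open MeasureTheory Filter
open scoped BigOperators

open Set Topology

private lemma aux_max_bound {N : ℕ} (g : Fin N → ℝ → ℝ) (c : Fin N → Fin N → ℝ → ℝ)
    (a b K : ℝ)
    (hg : ∀ t ∈ Icc a b, ∀ k, HasDerivAt (g k) (∑ j, c k j t * (g j t - g k t)) t)
    (hc : ∀ t ∈ Icc a b, ∀ k j, 0 ≤ c k j t)
    (hK : ∀ j, g j a ≤ K) :
    ∀ t ∈ Icc a b, ∀ k, g k t ≤ K := by
  have key : ∀ ε > (0:ℝ), ∀ t ∈ Icc a b, ∀ k, g k t ≤ K + ε * (1 + t - a) := by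
    intro ε hε
    by_contra hcon
    push_neg at hcon
    obtain ⟨t1, ht1, k1, hk1⟩ := hcon
    set ψ : Fin N → ℝ → ℝ := fun j t => g j t - (K + ε * (1 + t - a)) with hψdef
    have hψcont : ∀ j, ContinuousOn (ψ j) (Icc a b) := by
      intro j t ht
      exact (((hg t ht j).continuousAt).sub (by fun_prop)).continuousWithinAt
    set E : Set ℝ := ⋃ j, {t ∈ Icc a b | 0 ≤ ψ j t} with hE
    have ht1E : t1 ∈ E := by
      refine mem_iUnion.2 ⟨k1, ht1, ?_⟩
      simp only [hψdef]
      linarith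
    have hEsub : E ⊆ Icc a b := by
      intro t ht
      rcases mem_iUnion.1 ht with ⟨j, hj⟩
      exact hj.1
    have hEclosed : IsClosed E := by
      refine isClosed_iUnion_of_finite fun j => ?_
      have h := (hψcont j).preimage_isClosed_of_isClosed isClosed_Icc (isClosed_Ici (a := (0:ℝ)))
      have he : {t | t ∈ Icc a b ∧ 0 ≤ ψ j t} = Icc a b ∩ ψ j ⁻¹' Ici 0 := by
        ext t; simp [Set.mem_preimage]
      rw [he]; exact h
    have hEbdd : BddBelow E := ⟨a, fun t ht => (hEsub ht).1⟩
    set τ := sInf E with hτdef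
    have hτE : τ ∈ E := hEclosed.csInf_mem ⟨t1, ht1E⟩ hEbdd
    have hτIcc : τ ∈ Icc a b := hEsub hτE
    obtain ⟨k, hkτ⟩ : ∃ k, 0 ≤ ψ k τ := by
      rcases mem_iUnion.1 hτE with ⟨j, hj⟩
      exact ⟨j, hj.2⟩
    have hψa : ∀ j, ψ j a < 0 := by
      intro j; simp only [hψdef]
      have := hK j; linarith
    have hτa : a < τ := by
      rcases lt_or_eq_of_le hτIcc.1 with h | h
      · exact h
      · exact absurd hkτ (by rw [← h]; exact not_le.2 (hψa k))
    have hbefore : ∀ t, a ≤ t → t < τ → ∀ j, ψ j t < 0 := by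
      intro t hta htτ j
      by_contra hge
      push_neg at hge
      have htE : t ∈ E := mem_iUnion.2 ⟨j, ⟨hta, htτ.le.trans hτIcc.2⟩, hge⟩
      exact absurd (csInf_le hEbdd htE) (not_le.2 htτ)
    -- all ψ j τ ≤ 0
    have hψτ : ∀ j, ψ j τ ≤ 0 := by
      intro j
      have hcj : ContinuousAt (ψ j) τ :=
        ((hg τ hτIcc j).continuousAt).sub (by fun_prop)
      have hev : ∀ᶠ t in 𝓝[<] τ, ψ j t ≤ 0 := by
        filter_upwards [Ioo_mem_nhdsLT hτa] with t ht
        exact (hbefore t ht.1.le ht.2 j).le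
      exact le_of_tendsto (hcj.continuousWithinAt.tendsto) hev
    have hψkτ : ψ k τ = 0 := le_antisymm (hψτ k) hkτ
    -- derivative of ψ k at τ
    have hDg : HasDerivAt (g k) (∑ j, c k j τ * (g j τ - g k τ)) τ := hg τ hτIcc k
    have hDψ : HasDerivAt (ψ k) ((∑ j, c k j τ * (g j τ - g k τ)) - ε) τ := by
      have h2 : HasDerivAt (fun t => K + ε * (1 + t - a)) ε τ := by
        have : HasDerivAt (fun t : ℝ => t) 1 τ := hasDerivAt_id τ
        have h3 := ((this.const_add (1:ℝ)).sub_const a).const_mul ε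
        simpa using h3.const_add K
      exact hDg.sub h2
    have hDneg : (∑ j, c k j τ * (g j τ - g k τ)) - ε ≤ -ε := by
      have hsum : (∑ j, c k j τ * (g j τ - g k τ)) ≤ 0 := by
        refine Finset.sum_nonpos fun j _ => ?_
        have h1 : g j τ - g k τ = ψ j τ - ψ k τ := by simp only [hψdef]; ring
        have h2 : g j τ - g k τ ≤ 0 := by rw [h1, hψkτ]; simpa using hψτ j
        exact mul_nonpos_of_nonneg_of_nonpos (hc τ hτIcc k j) h2
      linarith
    -- slope nonneg from the left
    have hslope : Tendsto (slope (ψ k) τ) (𝓝[≠] τ) (𝓝 ((∑ j, c k j τ * (g j τ - g k τ)) - ε)) :=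
      hasDerivAt_iff_tendsto_slope.1 hDψ
    have hslope' : Tendsto (slope (ψ k) τ) (𝓝[<] τ) (𝓝 ((∑ j, c k j τ * (g j τ - g k τ)) - ε)) :=
      hslope.mono_left (nhdsWithin_mono τ (fun t ht => ne_of_lt ht))
    have hnn : ∀ᶠ t in 𝓝[<] τ, 0 ≤ slope (ψ k) τ t := by
      filter_upwards [Ioo_mem_nhdsLT hτa] with t ht
      have h1 : ψ k t ≤ 0 := (hbefore t ht.1.le ht.2 k).le
      have h2 : ψ k t - ψ k τ ≤ 0 := by rw [hψkτ]; linarith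
      have h3 : t - τ < 0 := sub_neg.2 ht.2
      rw [slope_def_field]
      rw [div_nonneg_iff]
      right
      constructor
      · rwa [hψkτ] at h2 ⊢
      · exact h3.le
    have : (0:ℝ) ≤ (∑ j, c k j τ * (g j τ - g k τ)) - ε :=
      ge_of_tendsto hslope' hnn
    linarith
  -- take ε → 0
  intro t ht k
  have hba : (0:ℝ) < 1 + b - a := by
    have := ht.1.trans ht.2; linarith [ht.1, ht.2]
  refine le_of_forall_pos_le_add fun ε hε => ?_
  have h1 := key (ε / (1 + b - a)) (by positivity) t ht k
  have h2 : ε / (1 + b - a) * (1 + t - a) ≤ ε := by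
    rw [div_mul_eq_mul_div, div_le_iff₀ hba]
    have h3 : 1 + t - a ≤ 1 + b - a := by linarith [ht.2]
    nlinarith [hε.le, h3]
  linarith

private lemma aux_min_bound {N : ℕ} (g : Fin N → ℝ → ℝ) (c : Fin N → Fin N → ℝ → ℝ)
    (a b K : ℝ)
    (hg : ∀ t ∈ Icc a b, ∀ k, HasDerivAt (g k) (∑ j, c k j t * (g j t - g k t)) t)
    (hc : ∀ t ∈ Icc a b, ∀ k j, 0 ≤ c k j t)
    (hK : ∀ j, K ≤ g j a) :
    ∀ t ∈ Icc a b, ∀ k, K ≤ g k t := by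
  have h := aux_max_bound (fun j t => -(g j t)) c a b (-K) ?_ hc (fun j => by simpa using hK j)
  · intro t ht k
    have h2 := h t ht k
    linarith
  · intro t ht k
    have h1 := (hg t ht k).neg
    have h2 : -(∑ j, c k j t * (g j t - g k t)) = ∑ j, c k j t * (-(g j t) - -(g k t)) := by
      rw [← Finset.sum_neg_distrib]
      exact Finset.sum_congr rfl fun j _ => by ring
    rwa [h2] at h1

open scoped RealInnerProductSpace

theorem PE_consensus_multidimensional
    (N d : ℕ) (hN : 2 ≤ N)
    (T μ : ℝ) (hT : 0 < T) (hμ : 0 < μ)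
    (φ : ℝ → ℝ) (L : NNReal) (hφ_lip : LipschitzWith L φ)
    (x : Fin N → ℝ → EuclideanSpace ℝ (Fin d))
    (hφ_min : ∀ r ∈ Set.Icc (0:ℝ) (⨆ p : Fin N × Fin N, ‖x p.1 0 - x p.2 0‖), 0 < φ r)
    (M : Fin N → Fin N → ℝ → ℝ)
    (hM_meas : ∀ i j, Measurable (M i j))
    (hM0 : ∀ i j s, 0 ≤ M i j s) (hM1 : ∀ i j s, M i j s ≤ 1)
    (hPE : ∀ i j, ∀ t ≥ (0:ℝ), μ ≤ ∫ s in t..(t + T), M i j s)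
    (hx : ∀ i, ∀ t ≥ (0:ℝ), HasDerivAt (x i)
      ((1 / (N : ℝ)) • ∑ j, (M i j t * φ (‖x i t - x j t‖)) • (x j t - x i t)) t) :
    ∃ xstar : EuclideanSpace ℝ (Fin d),
      ∀ i, Tendsto (x i) atTop (nhds xstar) := by
  have hN0 : 0 < N := by omega
  haveI : Nonempty (Fin N) := ⟨⟨0, hN0⟩⟩
  have hNR : (0:ℝ) < N := by exact_mod_cast hN0
  set D0 : ℝ := ⨆ p : Fin N × Fin N, ‖x p.1 0 - x p.2 0‖ with hD0def
  have hbdd : BddAbove (Set.range fun p : Fin N × Fin N => ‖x p.1 0 - x p.2 0‖) :=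
    (Set.finite_range _).bddAbove
  have hD0 : ∀ p q : Fin N, ‖x p 0 - x q 0‖ ≤ D0 := fun p q => le_ciSup hbdd (p, q)
  have hD0nn : 0 ≤ D0 := by
    have := hD0 ⟨0, hN0⟩ ⟨0, hN0⟩; simpa using this
  -- minimum of φ on [0, D0]
  obtain ⟨r0, hr0, hr0min⟩ := isCompact_Icc.exists_isMinOn (Set.nonempty_Icc.2 hD0nn)
    (hφ_lip.continuous.continuousOn)
  set m0 : ℝ := φ r0 with hm0def
  have hm0 : 0 < m0 := hφ_min r0 hr0
  have hm0le : ∀ r ∈ Set.Icc (0:ℝ) D0, m0 ≤ φ r := fun r hr => hr0min hr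
  set δ : ℝ := m0 / (2 * ((L:ℝ) + 1)) with hδdef
  have hLnn : (0:ℝ) ≤ (L:ℝ) := L.coe_nonneg
  have hδpos : 0 < δ := by positivity
  set φmin : ℝ := m0 / 2 with hφmindef
  have hφminpos : 0 < φmin := by positivity
  have hφlow : ∀ r ∈ Set.Icc (0:ℝ) (D0 + δ), φmin ≤ φ r := by
    intro r hr
    rcases le_or_gt r D0 with h | h
    · have := hm0le r ⟨hr.1, h⟩; simp only [hφmindef]; linarith
    · have hdist := hφ_lip.dist_le_mul r D0
      rw [Real.dist_eq, Real.dist_eq, abs_of_pos (by linarith : (0:ℝ) < r - D0)] at hdist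
      have h1 : |φ r - φ D0| ≤ (L:ℝ) * (r - D0) := hdist
      have h2 : (L:ℝ) * (r - D0) ≤ (L:ℝ) * δ :=
        mul_le_mul_of_nonneg_left (by linarith [hr.2]) hLnn
      have h3 : (L:ℝ) * δ ≤ m0 / 2 := by
        rw [hδdef, ← mul_div_assoc, div_le_div_iff₀ (by positivity) (by norm_num : (0:ℝ) < 2)]
        nlinarith
      have h4 : φ D0 - φ r ≤ |φ r - φ D0| := by
        rw [abs_sub_comm]; exact le_abs_self _
      have h5 : m0 ≤ φ D0 := hm0le D0 ⟨hD0nn, le_rfl⟩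
      simp only [hφmindef]; linarith
  set φmax : ℝ := φ 0 + (L:ℝ) * (D0 + δ) with hφmaxdef
  have hφhigh : ∀ r ∈ Set.Icc (0:ℝ) (D0 + δ), φ r ≤ φmax := by
    intro r hr
    have hdist := hφ_lip.dist_le_mul r 0
    rw [Real.dist_eq, Real.dist_eq, sub_zero, abs_of_nonneg hr.1] at hdist
    have h1 : φ r - φ 0 ≤ |φ r - φ 0| := le_abs_self _
    have h2 : (L:ℝ) * r ≤ (L:ℝ) * (D0 + δ) := mul_le_mul_of_nonneg_left hr.2 hLnn
    simp only [hφmaxdef]; linarith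
  have hφ0 : 0 < φ 0 := hφ_min 0 ⟨le_rfl, hD0nn⟩
  set C : ℝ := φmax with hCdef
  have hCpos : 0 < C := by
    have : (0:ℝ) ≤ (L:ℝ) * (D0 + δ) := by positivity
    simp only [hCdef, hφmaxdef]; linarith
  -- coefficients
  set c : Fin N → Fin N → ℝ → ℝ :=
    fun i j t => (1 / (N:ℝ)) * (M i j t * φ (‖x i t - x j t‖)) with hcdef
  -- derivative of inner products
  have gderiv : ∀ (v : EuclideanSpace ℝ (Fin d)) (i : Fin N), ∀ t ≥ (0:ℝ),
      HasDerivAt (fun s => ⟪v, x i s⟫)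
        (∑ j, c i j t * (⟪v, x j t⟫ - ⟪v, x i t⟫)) t := by
    intro v i t ht
    have h1 := (innerSL ℝ v).hasFDerivAt.comp_hasDerivAt t (hx i t ht)
    have h2 : (innerSL ℝ v) ((1 / (N : ℝ)) • ∑ j, (M i j t * φ (‖x i t - x j t‖)) • (x j t - x i t))
        = ∑ j, c i j t * (⟪v, x j t⟫ - ⟪v, x i t⟫) := by
      simp only [innerSL_apply_apply, real_inner_smul_right, inner_sum, inner_sub_right]
      rw [Finset.mul_sum]
      exact Finset.sum_congr rfl fun j _ => by rw [hcdef]; ring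
    rw [h2] at h1
    exact h1
  -- spread lemma
  have hSpread : ∀ a b : ℝ, 0 ≤ a →
      (∀ t ∈ Set.Icc a b, ∀ i j, 0 ≤ φ (‖x i t - x j t‖)) →
      ∀ K : ℝ, (∀ p q, ‖x p a - x q a‖ ≤ K) →
      ∀ t ∈ Set.Icc a b, ∀ s ∈ Set.Icc a b, ∀ p q, ‖x p t - x q s‖ ≤ K := by
    intro a b ha hnn K hK t ht s hs p q
    rcases eq_or_ne (x p t - x q s) 0 with h0 | h0
    · rw [h0, norm_zero]
      exact le_trans (by simp) (hK p p)
    set w := x p t - x q s with hw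
    set v := ‖w‖⁻¹ • w with hv
    have hwpos : 0 < ‖w‖ := norm_pos_iff.2 h0
    have hvnorm : ‖v‖ = 1 := by
      rw [hv, norm_smul, norm_inv, norm_norm, inv_mul_cancel₀ (ne_of_gt hwpos)]
    have hg : ∀ t' ∈ Set.Icc a b, ∀ k, HasDerivAt (fun s => ⟪v, x k s⟫)
        (∑ j, c k j t' * (⟪v, x j t'⟫ - ⟪v, x k t'⟫)) t' :=
      fun t' ht' k => gderiv v k t' (ha.trans ht'.1)
    have hcnn : ∀ t' ∈ Set.Icc a b, ∀ k j, 0 ≤ c k j t' := by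
      intro t' ht' k j
      exact mul_nonneg (by positivity) (mul_nonneg (hM0 k j t') (hnn t' ht' k j))
    obtain ⟨jM, hjM⟩ := Finite.exists_max (fun j => ⟪v, x j a⟫)
    obtain ⟨jm, hjm⟩ := Finite.exists_min (fun j => ⟪v, x j a⟫)
    have h1 := aux_max_bound _ c a b _ hg hcnn hjM t ht p
    have h2 := aux_min_bound _ c a b _ hg hcnn hjm s hs q
    have h3 : ‖w‖ = ⟪v, w⟫ := by
      rw [hv, real_inner_smul_left, real_inner_self_eq_norm_mul_norm]
      field_simp
    have h4 : ⟪v, w⟫ = ⟪v, x p t⟫ - ⟪v, x q s⟫ := by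
      rw [hw, inner_sub_right]
    have h5 : ⟪v, x jM a⟫ - ⟪v, x jm a⟫ ≤ K := by
      have h6 := real_inner_le_norm v (x jM a - x jm a)
      rw [inner_sub_right, hvnorm, one_mul] at h6
      exact le_trans h6 (hK jM jm)
    rw [h3, h4]
    linarith
  -- invariance of the initial diameter bound
  have hInv : ∀ t ≥ (0:ℝ), ∀ p q, ‖x p t - x q t‖ ≤ D0 := by
    by_contra hcon
    push_neg at hcon
    obtain ⟨t1, ht1, p1, q1, hbig⟩ := hcon
    set ε0 : ℝ := min δ (‖x p1 t1 - x q1 t1‖ - D0) with hε0def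
    have hε0pos : 0 < ε0 := lt_min hδpos (by linarith)
    have hε0δ : ε0 ≤ δ := min_le_left _ _
    have hxc : ∀ (i : Fin N) (t' : ℝ), 0 ≤ t' → ContinuousAt (x i) t' :=
      fun i t' h => (hx i t' h).continuousAt
    have hFc : ∀ p q : Fin N, ContinuousOn (fun t => ‖x p t - x q t‖) (Set.Icc 0 t1) :=
      fun p q r hr => (((hxc p r hr.1).sub (hxc q r hr.1)).norm).continuousWithinAt
    set E : Set ℝ := ⋃ pq : Fin N × Fin N,
      {t ∈ Set.Icc (0:ℝ) t1 | D0 + ε0 ≤ ‖x pq.1 t - x pq.2 t‖} with hEdef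
    have ht1E : t1 ∈ E := by
      refine Set.mem_iUnion.2 ⟨(p1, q1), ⟨⟨ht1, le_rfl⟩, ?_⟩⟩
      have : ε0 ≤ ‖x p1 t1 - x q1 t1‖ - D0 := min_le_right _ _
      simp only
      linarith
    have hEsub : E ⊆ Set.Icc 0 t1 := by
      intro t ht
      rcases Set.mem_iUnion.1 ht with ⟨pq, hpq⟩
      exact hpq.1
    have hEclosed : IsClosed E := by
      refine isClosed_iUnion_of_finite fun pq => ?_
      have h := (hFc pq.1 pq.2).preimage_isClosed_of_isClosed isClosed_Icc
        (isClosed_Ici (a := D0 + ε0))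
      have he : {t ∈ Set.Icc (0:ℝ) t1 | D0 + ε0 ≤ ‖x pq.1 t - x pq.2 t‖}
          = Set.Icc (0:ℝ) t1 ∩ (fun t => ‖x pq.1 t - x pq.2 t‖) ⁻¹' Set.Ici (D0 + ε0) := by
        ext t; simp [Set.mem_preimage]
      rw [he]; exact h
    have hEbdd : BddBelow E := ⟨0, fun t ht => (hEsub ht).1⟩
    set τ := sInf E with hτdef
    have hτE : τ ∈ E := hEclosed.csInf_mem ⟨t1, ht1E⟩ hEbdd
    have hτIcc : τ ∈ Set.Icc (0:ℝ) t1 := hEsub hτE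
    obtain ⟨pq, hpqτ⟩ := Set.mem_iUnion.1 hτE
    have hdistτ : D0 + ε0 ≤ ‖x pq.1 τ - x pq.2 τ‖ := hpqτ.2
    have hτpos : 0 < τ := by
      rcases lt_or_eq_of_le hτIcc.1 with h | h
      · exact h
      · exfalso
        have := hD0 pq.1 pq.2
        rw [← h] at hdistτ
        linarith
    have hbefore : ∀ t, 0 ≤ t → t < τ → ∀ i j, ‖x i t - x j t‖ < D0 + ε0 := by
      intro t h0t htτ i j
      by_contra hge
      push_neg at hge
      have htE : t ∈ E := Set.mem_iUnion.2 ⟨(i, j), ⟨⟨h0t, htτ.le.trans hτIcc.2⟩, hge⟩⟩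
      exact absurd (csInf_le hEbdd htE) (not_le.2 htτ)
    have hb : ∀ t ∈ Set.Icc (0:ℝ) τ, ∀ i j, ‖x i t - x j t‖ ≤ D0 + δ := by
      intro t ht i j
      rcases lt_or_eq_of_le ht.2 with h | h
      · have := hbefore t ht.1 h i j; linarith
      · have hcij : ContinuousAt (fun r => ‖x i r - x j r‖) τ :=
          ((hxc i τ hτIcc.1).sub (hxc j τ hτIcc.1)).norm
        have hev : ∀ᶠ t' in 𝓝[<] τ, ‖x i t' - x j t'‖ ≤ D0 + ε0 := by
          filter_upwards [Ioo_mem_nhdsLT hτpos] with t' ht'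
          exact (hbefore t' ht'.1.le ht'.2 i j).le
        have hle := le_of_tendsto hcij.continuousWithinAt.tendsto hev
        rw [h]
        linarith
    have hnnτ : ∀ t ∈ Set.Icc (0:ℝ) τ, ∀ i j, 0 ≤ φ (‖x i t - x j t‖) := by
      intro t ht i j
      exact le_trans hφminpos.le (hφlow _ ⟨norm_nonneg _, hb t ht i j⟩)
    have hfinal := hSpread 0 τ le_rfl hnnτ D0 hD0 τ ⟨hτIcc.1, le_rfl⟩ τ ⟨hτIcc.1, le_rfl⟩ pq.1 pq.2
    linarith
  -- global consequences
  have hnnG : ∀ t : ℝ, 0 ≤ t → ∀ i j, φmin ≤ φ (‖x i t - x j t‖) ∧ φ (‖x i t - x j t‖) ≤ φmax := by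
    intro t ht i j
    have h1 : ‖x i t - x j t‖ ∈ Set.Icc (0:ℝ) (D0 + δ) :=
      ⟨norm_nonneg _, le_trans (hInv t ht i j) (by linarith)⟩
    exact ⟨hφlow _ h1, hφhigh _ h1⟩
  have hcnnG : ∀ t : ℝ, 0 ≤ t → ∀ i j, 0 ≤ c i j t := by
    intro t ht i j
    exact mul_nonneg (by positivity)
      (mul_nonneg (hM0 i j t) (le_trans hφminpos.le (hnnG t ht i j).1))
  have hrow : ∀ t : ℝ, 0 ≤ t → ∀ k, (∑ j, c k j t) ≤ C := by
    intro t ht k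
    have h1 : ∀ j : Fin N, c k j t ≤ (1 / (N:ℝ)) * φmax := by
      intro j
      rw [hcdef]
      have h2 : M k j t * φ (‖x k t - x j t‖) ≤ 1 * φmax :=
        mul_le_mul (hM1 k j t) (hnnG t ht k j).2
          (le_trans hφminpos.le (hnnG t ht k j).1) zero_le_one
      have h3 : (0:ℝ) ≤ 1 / (N:ℝ) := by positivity
      nlinarith
    calc (∑ j, c k j t) ≤ ∑ _j : Fin N, (1 / (N:ℝ)) * φmax :=
          Finset.sum_le_sum fun j _ => h1 j
      _ = C := by
          rw [Finset.sum_const, Finset.card_univ, Fintype.card_fin, nsmul_eq_mul]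
          field_simp
          rfl
  -- constants
  set θ : ℝ := Real.exp (-(C*T)) * (φmin / N) * μ with hθdef
  have hθpos : 0 < θ := by positivity
  set θ' : ℝ := min θ (1/2) with hθ'def
  set γ : ℝ := 1 - θ' with hγdef
  have hθ'pos : 0 < θ' := lt_min hθpos (by norm_num)
  have hθ'le : θ' ≤ 1/2 := min_le_right _ _
  have hθ'θ : θ' ≤ θ := min_le_left _ _
  have hγ0 : 0 ≤ γ := by rw [hγdef]; linarith
  have hγ1 : γ < 1 := by rw [hγdef]; linarith
  -- interval integrability of the weights
  have hint_M : ∀ (a b : ℝ) (k j : Fin N), IntervalIntegrable (M k j) volume a b := by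
    intro a b k j
    rw [intervalIntegrable_iff]
    refine MeasureTheory.Integrable.mono'
      (integrableOn_const (C := (1:ℝ)) measure_Ioc_lt_top.ne) ?_ ?_
    · exact ((hM_meas k j).aestronglyMeasurable).restrict
    · exact MeasureTheory.ae_of_all _ fun s => by
        rw [Real.norm_eq_abs, abs_of_nonneg (hM0 k j s)]; exact hM1 k j s
  -- window contraction
  have hWin : ∀ t0 : ℝ, 0 ≤ t0 → ∀ K : ℝ, 0 ≤ K → (∀ p q, ‖x p t0 - x q t0‖ ≤ K) →
      ∀ p q, ‖x p (t0+T) - x q (t0+T)‖ ≤ γ * K := by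
    intro t0 ht0 K hKnn hK p q
    have hTend : t0 ≤ t0 + T := by linarith
    have hIccnn : ∀ {t : ℝ}, t ∈ Set.Icc t0 (t0+T) → 0 ≤ t := fun ht => ht0.trans ht.1
    rcases eq_or_ne (x p (t0+T) - x q (t0+T)) 0 with h0 | h0
    · rw [h0, norm_zero]; positivity
    set w := x p (t0+T) - x q (t0+T) with hw
    set v := ‖w‖⁻¹ • w with hv
    have hwpos : 0 < ‖w‖ := norm_pos_iff.2 h0
    have hvnorm : ‖v‖ = 1 := by
      rw [hv, norm_smul, norm_inv, norm_norm, inv_mul_cancel₀ (ne_of_gt hwpos)]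
    set g : Fin N → ℝ → ℝ := fun j s => ⟪v, x j s⟫ with hgdef
    have hg : ∀ t ∈ Set.Icc t0 (t0+T), ∀ k, HasDerivAt (g k)
        (∑ j, c k j t * (g j t - g k t)) t :=
      fun t ht k => gderiv v k t (hIccnn ht)
    have hcnn : ∀ t ∈ Set.Icc t0 (t0+T), ∀ k j, 0 ≤ c k j t :=
      fun t ht k j => hcnnG t (hIccnn ht) k j
    obtain ⟨jM, hjM⟩ := Finite.exists_max (fun j => g j t0)
    obtain ⟨jm, hjm⟩ := Finite.exists_min (fun j => g j t0)
    set Kmax : ℝ := g jM t0 with hKmaxdef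
    set Kmin : ℝ := g jm t0 with hKmindef
    set S : ℝ := Kmax - Kmin with hSdef
    have hSnn : 0 ≤ S := by rw [hSdef]; have := hjm jM; linarith [hjM jm]
    have hSK : S ≤ K := by
      have h6 := real_inner_le_norm v (x jM t0 - x jm t0)
      rw [inner_sub_right, hvnorm, one_mul] at h6
      rw [hSdef, hKmaxdef, hKmindef]
      exact le_trans h6 (hK jM jm)
    have hup : ∀ t ∈ Set.Icc t0 (t0+T), ∀ k, g k t ≤ Kmax :=
      aux_max_bound g c t0 (t0+T) Kmax hg hcnn hjM
    have hlo : ∀ t ∈ Set.Icc t0 (t0+T), ∀ k, Kmin ≤ g k t :=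
      aux_min_bound g c t0 (t0+T) Kmin hg hcnn hjm
    set y : Fin N → ℝ → ℝ := fun k s => Kmax - g k s with hydef
    have hy0 : ∀ t ∈ Set.Icc t0 (t0+T), ∀ k, 0 ≤ y k t :=
      fun t ht k => sub_nonneg.2 (hup t ht k)
    -- derivative of the exponential auxiliary functions
    have hedermul : ∀ (k : Fin N), ∀ t ∈ Set.Icc t0 (t0+T),
        HasDerivAt (fun s => Real.exp (C*s) * y k s)
          (Real.exp (C*t) * ((C * y k t) + (∑ j, c k j t * (y j t - y k t)))) t := by
      intro k t ht
      have he : HasDerivAt (fun s : ℝ => Real.exp (C*s)) (Real.exp (C*t) * C) t := by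
        have h1 := ((hasDerivAt_id t).const_mul C).exp
        simpa using h1
      have hyd : HasDerivAt (y k) (-(∑ j, c k j t * (g j t - g k t))) t := by
        have := (hasDerivAt_const t Kmax).sub (hg t ht k)
        rw [zero_sub] at this
        exact this
      have hprod := he.mul hyd
      have heq : Real.exp (C*t) * C * y k t + Real.exp (C*t) * -(∑ j, c k j t * (g j t - g k t))
          = Real.exp (C*t) * ((C * y k t) + (∑ j, c k j t * (y j t - y k t))) := by
        have hsum : (∑ j, c k j t * (y j t - y k t))
            = -(∑ j, c k j t * (g j t - g k t)) := by
          rw [← Finset.sum_neg_distrib]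
          exact Finset.sum_congr rfl fun j _ => by simp only [hydef]; ring
        rw [hsum]; ring
      rw [heq] at hprod
      exact hprod
    -- bound on the sum term
    have hsumlb : ∀ t ∈ Set.Icc t0 (t0+T), ∀ k,
        c k jm t * y jm t - C * y k t ≤ (∑ j, c k j t * (y j t - y k t)) := by
      intro t ht k
      have h1 : (∑ j, c k j t * (y j t - y k t))
          = (∑ j, c k j t * y j t) - (∑ j, c k j t) * y k t := by
        rw [Finset.sum_mul, ← Finset.sum_sub_distrib]
        exact Finset.sum_congr rfl fun j _ => by ring
      have h2 : c k jm t * y jm t ≤ ∑ j, c k j t * y j t :=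
        Finset.single_le_sum (f := fun j => c k j t * y j t)
          (fun j _ => mul_nonneg (hcnn t ht k j) (hy0 t ht j)) (Finset.mem_univ jm)
      have h3 : (∑ j, c k j t) * y k t ≤ C * y k t :=
        mul_le_mul_of_nonneg_right (hrow t (hIccnn ht) k) (hy0 t ht k)
      rw [h1]
      linarith
    -- Step 1: lower bound for y jm
    have hstep1 : ∀ t ∈ Set.Icc t0 (t0+T), Real.exp (-(C*(t - t0))) * S ≤ y jm t := by
      have hmono : MonotoneOn (fun s => Real.exp (C*s) * y jm s) (Set.Icc t0 (t0+T)) := by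
        refine monotoneOn_of_deriv_nonneg (convex_Icc _ _)
          (fun t ht => ((hedermul jm t ht).continuousAt).continuousWithinAt) ?_ ?_
        · intro t ht
          rw [interior_Icc] at ht
          exact ((hedermul jm t (Set.Ioo_subset_Icc_self ht)).differentiableAt).differentiableWithinAt
        · intro t ht
          rw [interior_Icc] at ht
          have htI := Set.Ioo_subset_Icc_self ht
          rw [(hedermul jm t htI).deriv]
          have h4 := hsumlb t htI jm
          have h5 : 0 ≤ C * y jm t - C * y jm t := by linarith
          have h6 : 0 ≤ c jm jm t * y jm t :=
            mul_nonneg (hcnn t htI jm jm) (hy0 t htI jm)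
          have h7 : 0 ≤ (C * y jm t) + (∑ j, c jm j t * (y j t - y jm t)) := by linarith
          positivity
      intro t ht
      have h8 := hmono (Set.left_mem_Icc.2 hTend) ht ht.1
      simp only at h8
      have hyjm0 : y jm t0 = S := by simp only [hydef, hSdef, hKmaxdef, hKmindef]
      rw [hyjm0] at h8
      have e1 : Real.exp (-(C*t)) * Real.exp (C*t) = 1 := by
        rw [← Real.exp_add]; simp
      have e2 : Real.exp (-(C*(t - t0))) = Real.exp (-(C*t)) * Real.exp (C*t0) := by
        rw [← Real.exp_add]; ring_nf
      have e3 : 0 < Real.exp (-(C*t)) := Real.exp_pos _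
      calc Real.exp (-(C*(t - t0))) * S = Real.exp (-(C*t)) * (Real.exp (C*t0) * S) := by
            rw [e2]; ring
        _ ≤ Real.exp (-(C*t)) * (Real.exp (C*t) * y jm t) :=
            mul_le_mul_of_nonneg_left h8 e3.le
        _ = y jm t := by rw [← mul_assoc, e1, one_mul]
    -- Step 2: every agent is pulled down
    have hstep2 : ∀ k, θ * S ≤ y k (t0+T) := by
      intro k
      set cβ : ℝ := Real.exp (C*t0) * (φmin / N) * S with hcβdef
      have hcβnn : 0 ≤ cβ := by positivity
      set w2' : ℝ → ℝ := fun s =>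
        Real.exp (C*s) * ((C * y k s) + (∑ j, c k j s * (y j s - y k s))) with hw2'def
      set β : ℝ → ℝ := fun s => cβ * M k jm s with hβdef
      -- pointwise bound β ≤ w2'
      have hβle : ∀ s ∈ Set.Icc t0 (t0+T), β s ≤ w2' s := by
        intro s hs
        have h1 := hsumlb s hs k
        have h2 : (φmin / N) * M k jm s ≤ c k jm s := by
          have hc_eq : c k jm s = (1 / (N:ℝ)) * (M k jm s * φ (‖x k s - x jm s‖)) := rfl
          have h3 := (hnnG s (hIccnn hs) k jm).1
          have h4 := hM0 k jm s
          have h5 : (0:ℝ) < 1 / (N:ℝ) := by positivity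
          have e1 : (φmin / N) * M k jm s = ((1/(N:ℝ)) * M k jm s) * φmin := by ring
          have e2 : (1/(N:ℝ)) * (M k jm s * φ (‖x k s - x jm s‖))
              = ((1/(N:ℝ)) * M k jm s) * φ (‖x k s - x jm s‖) := by ring
          rw [hc_eq, e1, e2]
          exact mul_le_mul_of_nonneg_left h3 (mul_nonneg h5.le h4)
        have h7 := hstep1 s hs
        have h8 : ((φmin / N) * M k jm s) * (Real.exp (-(C*(s-t0))) * S) ≤ c k jm s * y jm s :=
          mul_le_mul h2 h7 (mul_nonneg (Real.exp_pos _).le hSnn) (hcnn s hs k jm)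
        have e : Real.exp (C*s) * Real.exp (-(C*(s-t0))) = Real.exp (C*t0) := by
          rw [← Real.exp_add]; ring_nf
        have e2 : β s = Real.exp (C*s) * (Real.exp (-(C*(s-t0))) * ((φmin / N) * M k jm s * S)) := by
          simp only [hβdef, hcβdef]
          rw [← e]; ring
        rw [e2]
        refine mul_le_mul_of_nonneg_left ?_ (Real.exp_pos _).le
        have e3 : Real.exp (-(C*(s-t0))) * ((φmin / N) * M k jm s * S)
            = ((φmin / N) * M k jm s) * (Real.exp (-(C*(s-t0))) * S) := by ring
        rw [e3]
        have h9 : c k jm s * y jm s ≤ C * y k s + ∑ j, c k j s * (y j s - y k s) := by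
          linarith [h1]
        exact le_trans h8 h9
      -- integrability
      set B : Fin N → ℝ → ℝ := fun j s =>
        Real.exp (C*s) * ((1/(N:ℝ)) * φ (‖x k s - x j s‖) * (g k s - g j s)) with hBdef
      have hw2'eq : w2' = fun s => Real.exp (C*s) * (C * y k s) + ∑ j, M k j s * B j s := by
        funext s
        have h1 : ∀ j : Fin N, M k j s * B j s = Real.exp (C*s) * (c k j s * (y j s - y k s)) :=
          fun j => by simp only [hBdef, hcdef, hydef]; ring
        rw [Finset.sum_congr rfl (fun j _ => h1 j), ← Finset.mul_sum]
        simp only [hw2'def]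
        ring
      have hxcOn : ∀ i : Fin N, ContinuousOn (x i) (Set.Icc t0 (t0+T)) :=
        fun i s hs => ((hx i s (hIccnn hs)).continuousAt).continuousWithinAt
      have hgOn : ∀ i : Fin N, ContinuousOn (g i) (Set.Icc t0 (t0+T)) :=
        fun i => ContinuousOn.inner continuousOn_const (hxcOn i)
      have hexpOn : ContinuousOn (fun s : ℝ => Real.exp (C*s)) (Set.Icc t0 (t0+T)) :=
        (Real.continuous_exp.comp (continuous_const.mul continuous_id)).continuousOn
      have hBOn : ∀ j : Fin N, ContinuousOn (B j) (Set.Icc t0 (t0+T)) := by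
        intro j
        refine hexpOn.mul (ContinuousOn.mul (ContinuousOn.mul continuousOn_const ?_)
          ((hgOn k).sub (hgOn j)))
        exact hφ_lip.continuous.comp_continuousOn (((hxcOn k).sub (hxcOn j)).norm)
      have hyOn : ContinuousOn (y k) (Set.Icc t0 (t0+T)) := continuousOn_const.sub (hgOn k)
      have hint_w2' : IntervalIntegrable w2' volume t0 (t0+T) := by
        rw [hw2'eq]
        refine IntervalIntegrable.add ?_ ?_
        · refine ContinuousOn.intervalIntegrable ?_
          rw [Set.uIcc_of_le hTend]
          exact hexpOn.mul (continuousOn_const.mul hyOn)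
        · have hterm : ∀ j : Fin N, IntervalIntegrable (fun s => M k j s * B j s) volume t0 (t0+T) := by
            intro j
            refine (hint_M t0 (t0+T) k j).mul_continuousOn ?_
            rw [Set.uIcc_of_le hTend]
            exact hBOn j
          have hsum := IntervalIntegrable.sum (μ := volume) Finset.univ (fun j _ => hterm j)
          have heq2 : (∑ j ∈ Finset.univ, fun s => M k j s * B j s)
              = (fun s => ∑ j : Fin N, M k j s * B j s) := by
            funext s
            simp [Finset.sum_apply]
          rwa [heq2] at hsum
      have hint_β : IntervalIntegrable β volume t0 (t0+T) := by
        simp only [hβdef]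
        exact (hint_M t0 (t0+T) k jm).const_mul cβ
      -- FTC
      have hFTC : ∫ s in t0..(t0+T), w2' s
          = Real.exp (C*(t0+T)) * y k (t0+T) - Real.exp (C*t0) * y k t0 := by
        have := intervalIntegral.integral_eq_sub_of_hasDerivAt
          (f := fun s => Real.exp (C*s) * y k s) (f' := w2')
          (fun s hs => by
            rw [Set.uIcc_of_le hTend] at hs
            exact hedermul k s hs) hint_w2'
        simpa using this
      have hmono2 := intervalIntegral.integral_mono_on hTend hint_β hint_w2' hβle
      have hinteg_β : ∫ s in t0..(t0+T), β s = cβ * ∫ s in t0..(t0+T), M k jm s := by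
        simp only [hβdef]
        exact intervalIntegral.integral_const_mul cβ _
      have hPEk := hPE k jm t0 ht0
      have hβμ : cβ * μ ≤ ∫ s in t0..(t0+T), β s := by
        rw [hinteg_β]
        exact mul_le_mul_of_nonneg_left hPEk hcβnn
      have hyk0 : 0 ≤ Real.exp (C*t0) * y k t0 :=
        mul_nonneg (Real.exp_pos _).le (hy0 t0 (Set.left_mem_Icc.2 hTend) k)
      have hfin : cβ * μ ≤ Real.exp (C*(t0+T)) * y k (t0+T) := by
        have h1 : cβ * μ ≤ ∫ s in t0..(t0+T), w2' s := le_trans hβμ hmono2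
        rw [hFTC] at h1
        linarith
      have ee : Real.exp (C*(t0+T)) * Real.exp (-(C*T)) = Real.exp (C*t0) := by
        rw [← Real.exp_add]; ring_nf
      have e4 : Real.exp (C*(t0+T)) * (θ * S) = cβ * μ := by
        rw [hcβdef, hθdef, ← ee]; ring
      have h5 : Real.exp (C*(t0+T)) * (θ * S) ≤ Real.exp (C*(t0+T)) * y k (t0+T) := by
        rw [e4]; exact hfin
      exact le_of_mul_le_mul_left h5 (Real.exp_pos _)
    -- conclude the window contraction
    have hgp : g p (t0+T) ≤ Kmax - θ * S := by
      have := hstep2 p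
      simp only [hydef] at this
      linarith
    have hgq : Kmin ≤ g q (t0+T) := hlo (t0+T) (Set.right_mem_Icc.2 hTend) q
    have h3 : ‖w‖ = ⟪v, w⟫ := by
      rw [hv, real_inner_smul_left, real_inner_self_eq_norm_mul_norm]
      field_simp
    have h4 : ⟪v, w⟫ = g p (t0+T) - g q (t0+T) := by
      rw [hw, inner_sub_right]
    have h6 : ‖x p (t0+T) - x q (t0+T)‖ = g p (t0+T) - g q (t0+T) := by
      rw [← h4, ← h3]
    rw [h6]
    have h7 : (1 - θ) * S ≤ (1 - θ') * S :=
      mul_le_mul_of_nonneg_right (by linarith) hSnn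
    have h8 : (1 - θ') * S ≤ (1 - θ') * K :=
      mul_le_mul_of_nonneg_left hSK (by linarith)
    have h9 : γ * K = (1 - θ') * K := by rw [hγdef]
    rw [h9]
    have e5 : (1 - θ) * S = S - θ * S := by ring
    have e6 : S = Kmax - Kmin := hSdef
    linarith [h7, h8, hgp, hgq, e5, e6]
  -- iterate the contraction
  have hIter : ∀ n : ℕ, ∀ p q, ‖x p ((n:ℝ)*T) - x q ((n:ℝ)*T)‖ ≤ γ^n * D0 := by
    intro n
    induction n with
    | zero => simpa using hD0
    | succ n ih =>
      have hnT : 0 ≤ (n:ℝ)*T := by positivity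
      have h1 := hWin ((n:ℝ)*T) hnT (γ^n * D0) (by positivity) ih
      intro p q
      have e : ((n+1:ℕ):ℝ)*T = (n:ℝ)*T + T := by push_cast; ring
      rw [e]
      calc ‖x p ((n:ℝ)*T + T) - x q ((n:ℝ)*T + T)‖ ≤ γ * (γ^n * D0) := h1 p q
        _ = γ^(n+1) * D0 := by ring
  -- cross-time bounds
  have hnnI : ∀ a b : ℝ, 0 ≤ a → ∀ t ∈ Set.Icc a b, ∀ i j, 0 ≤ φ (‖x i t - x j t‖) :=
    fun a b ha t ht i j => le_trans hφminpos.le (hnnG t (ha.trans ht.1) i j).1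
  have hCross : ∀ a : ℝ, 0 ≤ a → ∀ K : ℝ, (∀ p q, ‖x p a - x q a‖ ≤ K) →
      ∀ t ≥ a, ∀ s ≥ a, ∀ i j, ‖x i t - x j s‖ ≤ K := by
    intro a ha K hK t htg s hsg i j
    exact hSpread a (max t s) ha (hnnI a (max t s) ha) K hK t ⟨htg, le_max_left t s⟩
      s ⟨hsg, le_max_right t s⟩ i j
  set p0 : Fin N := ⟨0, hN0⟩ with hp0
  set cs : ℕ → EuclideanSpace ℝ (Fin d) := fun n => x p0 ((n:ℝ)*T) with hcsdef
  have hdc : ∀ n : ℕ, ∀ i : Fin N, ∀ t ≥ (n:ℝ)*T, dist (x i t) (cs n) ≤ γ^n * D0 := by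
    intro n i t ht
    rw [hcsdef, dist_eq_norm]
    exact hCross ((n:ℝ)*T) (by positivity) _ (hIter n) t ht ((n:ℝ)*T) le_rfl i p0
  have hcseq : CauchySeq cs := by
    refine cauchySeq_of_le_geometric γ D0 hγ1 (fun n => ?_)
    have h1 : ((n:ℝ))*T ≤ ((n+1:ℕ):ℝ)*T := by
      have : ((n:ℝ)) ≤ ((n+1:ℕ):ℝ) := by push_cast; linarith
      exact mul_le_mul_of_nonneg_right this hT.le
    have h2 := hdc n p0 (((n+1:ℕ):ℝ)*T) h1
    rw [dist_comm] at h2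
    calc dist (cs n) (cs (n+1)) ≤ γ^n * D0 := h2
      _ = D0 * γ^n := by ring
  obtain ⟨xstar, hstar⟩ := cauchySeq_tendsto_of_complete hcseq
  have hxsn : ∀ n : ℕ, dist xstar (cs n) ≤ γ^n * D0 := by
    intro n
    have h1 : Tendsto (fun m : ℕ => dist (cs m) (cs n)) atTop (nhds (dist xstar (cs n))) :=
      hstar.dist tendsto_const_nhds
    refine le_of_tendsto h1 ?_
    filter_upwards [eventually_ge_atTop n] with m hm
    have h3 : ((n:ℝ))*T ≤ ((m:ℝ))*T :=
      mul_le_mul_of_nonneg_right (by exact_mod_cast hm) hT.le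
    exact hdc n p0 ((m:ℝ)*T) h3
  refine ⟨xstar, fun i => ?_⟩
  rw [Metric.tendsto_atTop]
  intro ε hε
  have h0 : Tendsto (fun n : ℕ => γ^n * D0) atTop (nhds 0) := by
    have h1 := (tendsto_pow_atTop_nhds_zero_of_lt_one hγ0 hγ1).mul_const D0
    simpa using h1
  obtain ⟨n, hn⟩ := (h0.eventually_lt_const (by positivity : (0:ℝ) < ε/3)).exists
  refine ⟨(n:ℝ)*T, fun t ht => ?_⟩
  have h1 := hdc n i t ht
  have h2 := hxsn n
  have h3 : dist (x i t) xstar ≤ dist (x i t) (cs n) + dist (cs n) xstar :=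
    dist_triangle _ _ _
  rw [dist_comm (cs n) xstar] at h3
  linarith
end
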